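/- arXiv:2309.06155 — 3 statements merged into one kernel-verified Lean document; each statement's English description precedes it below -/
import Mathlib

section
/- Let f ∈ L¹(S) and f^{(1)}(e^{iθ}) = f(e^{iθ}) - (P_r * f)(e^{iθ}) for a fixed 0 < r < 1, where P_r * f denotes convolution with the Poisson kernel. Then for every arc I, (1/|I|)∫_I |f^{(1)} - f^{(1)}_I| dθ ≤ 2 sup over arcs I' with |I'| = |I| of (1/|I'|)∫_{I'} |f - f_{I'}| dθ. Consequently, if f ∈ VMO(S) then f^{(1)} ∈ VMO(S). -/
open MeasureTheory Real Set Filter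

/-- Mean of `f` over the arc `[a, a+h]` (functions on the circle are viewed as
`2π`-periodic functions on `ℝ`). -/
noncomputable def circAvg (f : ℝ → ℝ) (a h : ℝ) : ℝ := (∫ θ in a..(a + h), f θ) / h

/-- Mean oscillation of `f` over the arc `[a, a+h]`. -/
noncomputable def circOsc (f : ℝ → ℝ) (a h : ℝ) : ℝ :=
  (∫ θ in a..(a + h), |f θ - circAvg f a h|) / h

/-- `f ∈ BMO(𝕊)`. -/
def IsBMOS (f : ℝ → ℝ) : Prop :=
  Function.Periodic f (2 * π) ∧ LocallyIntegrable f ∧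
    ∃ C, ∀ a h, 0 < h → h ≤ 2 * π → circOsc f a h ≤ C

/-- `f ∈ VMO(𝕊)`. -/
def IsVMOS (f : ℝ → ℝ) : Prop :=
  IsBMOS f ∧ ∀ ε > 0, ∃ δ > 0, ∀ a h, 0 < h → h ≤ δ → circOsc f a h ≤ ε

/-- Poisson kernel of the unit disk: `P_z(e^{iθ}) = (1/2π)(1-|z|²)/|1 - e^{-iθ} z|²`. -/
noncomputable def poissonDisk (z : ℂ) (θ : ℝ) : ℝ :=
  (1 - ‖z‖ ^ 2) / (2 * π * ‖1 - Complex.exp (-(θ : ℂ) * Complex.I) * z‖ ^ 2)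


/-- Poisson kernel on the circle, `P_r(θ) = (1/2π)(1-r²)/(1-2r cos θ + r²)`. -/
noncomputable def poissonCirc (r θ : ℝ) : ℝ :=
  (1 - r ^ 2) / (2 * π * (1 - 2 * r * Real.cos θ + r ^ 2))

/-- Convolution with the Poisson kernel: `(P_r * f)(e^{iθ}) = ∫₀^{2π} P_r(φ) f(e^{i(θ-φ)}) dφ`. -/
noncomputable def poissonConv (f : ℝ → ℝ) (r θ : ℝ) : ℝ :=
  ∫ φ in (0:ℝ)..(2 * π), poissonCirc r φ * f (θ - φ)

variable {r : ℝ}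

lemma denom_pos (hr0 : 0 < r) (hr1 : r < 1) (θ : ℝ) :
    0 < 1 - 2 * r * Real.cos θ + r ^ 2 := by
  nlinarith [Real.cos_le_one θ, Real.neg_one_le_cos θ]

lemma poissonCirc_nonneg (hr0 : 0 < r) (hr1 : r < 1) (θ : ℝ) :
    0 ≤ poissonCirc r θ := by
  have := denom_pos hr0 hr1 θ
  have hπ := Real.pi_pos
  apply div_nonneg (by nlinarith) (by positivity)

lemma poissonCirc_continuous (hr0 : 0 < r) (hr1 : r < 1) :
    Continuous (poissonCirc r) := by
  apply continuous_const.div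
  · fun_prop
  · intro θ
    have := denom_pos hr0 hr1 θ
    have hπ := Real.pi_pos
    positivity

lemma poissonCirc_le (hr0 : 0 < r) (hr1 : r < 1) (θ : ℝ) :
    poissonCirc r θ ≤ (1 - r ^ 2) / (2 * π * (1 - r) ^ 2) := by
  have hπ := Real.pi_pos
  have h0 : (0:ℝ) < (1 - r) ^ 2 := pow_pos (by linarith) 2
  have h1 : 0 < 2 * π * (1 - r) ^ 2 := by positivity
  have h2 : 2 * π * (1 - r) ^ 2 ≤ 2 * π * (1 - 2 * r * Real.cos θ + r ^ 2) := by
    have hc : (1 - r) ^ 2 ≤ 1 - 2 * r * Real.cos θ + r ^ 2 := by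
      have := Real.cos_le_one θ; nlinarith
    exact mul_le_mul_of_nonneg_left hc (by positivity)
  exact div_le_div_of_nonneg_left (by nlinarith) h1 h2

lemma one_sub_c_ne (hr0 : 0 < r) (hr1 : r < 1) (θ : ℝ) :
    1 - (r : ℂ) * Complex.exp (θ * Complex.I) ≠ 0 := by
  intro h
  have h1 : (1 : ℂ) = (r : ℂ) * Complex.exp (θ * Complex.I) := by
    linear_combination h
  have h2 : ‖(1:ℂ)‖ = ‖(r : ℂ) * Complex.exp (θ * Complex.I)‖ := by rw [← h1]
  rw [norm_mul, Complex.norm_exp] at h2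
  simp [abs_of_pos hr0] at h2
  linarith

lemma integral_poissonCirc (hr0 : 0 < r) (hr1 : r < 1) :
    ∫ θ in (0:ℝ)..(2 * π), poissonCirc r θ = 1 := by
  have hπ := Real.pi_pos
  set c : ℝ → ℂ := fun θ => (r : ℂ) * Complex.exp (θ * Complex.I) with hc
  have hne : ∀ θ : ℝ, 1 - c θ ≠ 0 := one_sub_c_ne hr0 hr1
  set G : ℝ → ℂ := fun θ => (1 + c θ) / (1 - c θ) with hG
  have hccont : Continuous c := by fun_prop
  have hGcont : Continuous G :=
    (continuous_const.add hccont).div (continuous_const.sub hccont) hne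
  -- derivative of c
  have hcd : ∀ θ : ℝ, HasDerivAt c (c θ * Complex.I) θ := by
    intro θ
    have h1 : HasDerivAt (fun θ : ℝ => (θ : ℂ) * Complex.I) Complex.I θ := by
      simpa using (Complex.ofRealCLM.hasDerivAt (x := θ)).mul_const Complex.I
    have h3 := (h1.cexp).const_mul (r : ℂ)
    convert h3 using 1
    · rfl
    simp [hc]; ring
  -- slit plane membership
  have hslit : ∀ θ : ℝ, 1 - c θ ∈ Complex.slitPlane := by
    intro θ
    left
    have : (1 - c θ).re = 1 - r * Real.cos θ := by
      simp [hc, Complex.exp_ofReal_mul_I_re]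
    rw [this]
    have := Real.neg_one_le_cos θ
    have := Real.cos_le_one θ
    nlinarith
  -- antiderivative
  have hΦ : ∀ θ : ℝ, HasDerivAt
      (fun θ : ℝ => (θ : ℂ) + 2 * Complex.I * Complex.log (1 - c θ)) (G θ) θ := by
    intro θ
    have hd1 : HasDerivAt (fun θ : ℝ => (θ : ℂ)) 1 θ := Complex.ofRealCLM.hasDerivAt
    have hd2 := (hasDerivAt_const θ (1:ℂ)).sub (hcd θ)
    have hd3 := (hd2.clog_real (hslit θ))
    have := hd1.add (hd3.const_mul (2 * Complex.I))
    convert this using 1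
    · rfl
    · rfl
    rw [hG]
    simp only [Pi.sub_apply]
    field_simp [hne θ]
    ring_nf
    simp only [Complex.I_sq]
    ring
  have hFTC : ∫ θ in (0:ℝ)..(2 * π), G θ =
      ((2 * π : ℝ) : ℂ) + 2 * Complex.I * Complex.log (1 - c (2 * π)) -
        (((0:ℝ) : ℂ) + 2 * Complex.I * Complex.log (1 - c 0)) := by
    exact intervalIntegral.integral_eq_sub_of_hasDerivAt (fun θ _ => hΦ θ)
      (hGcont.intervalIntegrable _ _)
  have hc2π : c (2 * π) = c 0 := by
    have he : ((2 * π : ℝ) : ℂ) * Complex.I = 2 * ↑π * Complex.I := by push_cast; ring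
    simp only [hc, he, Complex.exp_two_pi_mul_I, Complex.ofReal_zero, zero_mul,
      Complex.exp_zero]
  have hGint : ∫ θ in (0:ℝ)..(2 * π), G θ = ((2 * π : ℝ) : ℂ) := by
    rw [hFTC, hc2π]; push_cast; ring
  -- real parts
  have hre : ∀ θ : ℝ, poissonCirc r θ = (G θ).re / (2 * π) := by
    intro θ
    have hs := Real.sin_sq_add_cos_sq θ
    have hxre : (Complex.exp ((θ:ℂ) * Complex.I)).re = Real.cos θ :=
      Complex.exp_ofReal_mul_I_re θ
    have hxim : (Complex.exp ((θ:ℂ) * Complex.I)).im = Real.sin θ :=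
      Complex.exp_ofReal_mul_I_im θ
    have hnormSq : Complex.normSq (1 - c θ) = 1 - 2 * r * Real.cos θ + r ^ 2 := by
      simp only [Complex.normSq_apply, hc, Complex.sub_re, Complex.sub_im, Complex.one_re,
        Complex.one_im, Complex.mul_re, Complex.mul_im, Complex.ofReal_re, Complex.ofReal_im,
        hxre, hxim]
      ring_nf
      linear_combination (r ^ 2) * hs
    have hGre : (G θ).re = (1 - r ^ 2) / (1 - 2 * r * Real.cos θ + r ^ 2) := by
      rw [hG]
      simp only [Complex.div_re, hnormSq, Complex.add_re, Complex.add_im, Complex.sub_re,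
        Complex.sub_im, Complex.one_re, Complex.one_im, hc, Complex.mul_re, Complex.mul_im,
        Complex.ofReal_re, Complex.ofReal_im, hxre, hxim]
      rw [← add_div]
      congr 1
      ring_nf
      linear_combination (-(r ^ 2)) * hs
    rw [poissonCirc, hGre, div_div]
    ring_nf
  calc ∫ θ in (0:ℝ)..(2 * π), poissonCirc r θ
      = ∫ θ in (0:ℝ)..(2 * π), (G θ).re / (2 * π) :=
        intervalIntegral.integral_congr (fun θ _ => hre θ)
    _ = (∫ θ in (0:ℝ)..(2 * π), (G θ).re) / (2 * π) := intervalIntegral.integral_div _ _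
    _ = 1 := by
        have hint := Complex.reCLM.intervalIntegral_comp_comm (μ := volume)
          (hGcont.intervalIntegrable 0 (2 * π))
        simp only [Complex.reCLM_apply] at hint
        rw [hint, hGint, Complex.ofReal_re]
        field_simp

section Helpers

variable {f : ℝ → ℝ}

lemma circOsc_nonneg (f : ℝ → ℝ) (a h : ℝ) (hh : 0 < h) : 0 ≤ circOsc f a h := by
  apply div_nonneg _ hh.le
  apply intervalIntegral.integral_nonneg (by linarith)
  intro x _; positivity

lemma loc_intervalIntegrable (hint : LocallyIntegrable f volume) (a b : ℝ) :
    IntervalIntegrable f volume a b :=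
  (hint.integrableOn_isCompact isCompact_uIcc).intervalIntegrable

lemma translate_integrableOn (hint : LocallyIntegrable f volume) (θ c d : ℝ) :
    IntegrableOn (fun φ => f (θ - φ)) (Ioc c d) volume := by
  rcases le_or_gt c d with hcd | hcd
  · have h2 := (loc_intervalIntegrable hint (θ - c) (θ - d)).comp_sub_left θ
    simp only [sub_sub_cancel] at h2
    exact (intervalIntegrable_iff_integrableOn_Ioc_of_le hcd).1 h2
  · simp [Ioc_eq_empty (not_lt.2 hcd.le), integrableOn_empty]

lemma translate_integrableOn_right (hint : LocallyIntegrable f volume) (φ c d : ℝ) :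
    IntegrableOn (fun θ => f (θ - φ)) (Ioc c d) volume := by
  rcases le_or_gt c d with hcd | hcd
  · have h2 := (loc_intervalIntegrable hint (c - φ) (d - φ)).comp_sub_right φ
    simp only [sub_add_cancel] at h2
    exact (intervalIntegrable_iff_integrableOn_Ioc_of_le hcd).1 h2
  · simp [Ioc_eq_empty (not_lt.2 hcd.le), integrableOn_empty]

lemma translate_aesm (hint : LocallyIntegrable f volume) (s t : Set ℝ) :
    AEStronglyMeasurable (fun p : ℝ × ℝ => f (p.1 - p.2))
      ((volume.restrict s).prod (volume.restrict t)) := by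
  have h1 : Measure.QuasiMeasurePreserving (fun p : ℝ × ℝ => p.1 - p.2)
      ((volume : Measure ℝ).prod volume) volume :=
    quasiMeasurePreserving_sub_of_right_invariant volume volume
  have h2 : ((volume.restrict s).prod (volume.restrict t)) ≪
      ((volume : Measure ℝ).prod volume) :=
    Measure.AbsolutelyContinuous.prod
      (Measure.absolutelyContinuous_of_le Measure.restrict_le_self)
      (Measure.absolutelyContinuous_of_le Measure.restrict_le_self)
  exact hint.aestronglyMeasurable.comp_quasiMeasurePreserving (h1.mono_left h2)

lemma translate_norm_integral (hper : Function.Periodic f (2 * π)) (θ : ℝ) :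
    (∫ φ in Ioc (0:ℝ) (2 * π), |f (θ - φ)|) = ∫ x in Ioc (0:ℝ) (2 * π), |f x| := by
  have hπ := Real.pi_pos
  have h2π : (0:ℝ) ≤ 2 * π := by positivity
  rw [← intervalIntegral.integral_of_le h2π, ← intervalIntegral.integral_of_le h2π,
    intervalIntegral.integral_comp_sub_left (fun x => |f x|) θ]
  have habs : Function.Periodic (fun x => |f x|) (2 * π) := fun x => by simp [hper x]
  have h3 := habs.intervalIntegral_add_eq (θ - 2 * π) 0
  simpa using h3

lemma prod_integrable (hper : Function.Periodic f (2 * π))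
    (hint : LocallyIntegrable f volume) (c d : ℝ) :
    Integrable (fun p : ℝ × ℝ => f (p.1 - p.2))
      ((volume.restrict (Ioc c d)).prod (volume.restrict (Ioc (0:ℝ) (2 * π)))) := by
  have hπ := Real.pi_pos
  rw [integrable_prod_iff (translate_aesm hint _ _)]
  constructor
  · exact ae_of_all _ fun θ => translate_integrableOn hint θ 0 (2 * π)
  · have hconst : ∀ θ : ℝ,
        (∫ φ, ‖f (θ - φ)‖ ∂(volume.restrict (Ioc (0:ℝ) (2 * π)))) =
          ∫ x in Ioc (0:ℝ) (2 * π), |f x| := by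
      intro θ
      simp only [Real.norm_eq_abs]
      exact translate_norm_integral hper θ
    exact ((integrableOn_const measure_Ioc_lt_top.ne).congr
      (ae_of_all _ fun θ => (hconst θ).symm))

end Helpers

set_option maxHeartbeats 1000000 in
lemma key_osc (f : ℝ → ℝ) (r : ℝ) (hper : Function.Periodic f (2 * π))
    (hint : LocallyIntegrable f volume) (hr0 : 0 < r) (hr1 : r < 1)
    (a h B : ℝ) (hh : 0 < h) (hB : ∀ a', circOsc f a' h ≤ B) :
    circOsc (fun θ => f θ - poissonConv f r θ) a h ≤ 2 * B := by
  have hπ := Real.pi_pos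
  have h2π : (0:ℝ) ≤ 2 * π := by positivity
  have hle : a ≤ a + h := by linarith
  set ν := volume.restrict (Ioc (0:ℝ) (2 * π)) with hν
  set μ := volume.restrict (Ioc a (a + h)) with hμ
  set P := poissonCirc r with hPdef
  have hP0 : ∀ φ, 0 ≤ P φ := poissonCirc_nonneg hr0 hr1
  have hPcont : Continuous P := poissonCirc_continuous hr0 hr1
  have hPbdd : ∃ C, ∀ φ, ‖P φ‖ ≤ C :=
    ⟨(1 - r ^ 2) / (2 * π * (1 - r) ^ 2), fun φ => by
      rw [Real.norm_eq_abs, abs_of_nonneg (hP0 φ)]; exact poissonCirc_le hr0 hr1 φ⟩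
  have hP1 : ∫ φ in Ioc (0:ℝ) (2 * π), P φ = 1 := by
    rw [← intervalIntegral.integral_of_le h2π]; exact integral_poissonCirc hr0 hr1
  have hPν : Integrable P ν := (hPcont.intervalIntegrable 0 (2 * π)).1
  -- integrability of translates
  have htr : ∀ θ, Integrable (fun φ => f (θ - φ)) ν :=
    fun θ => translate_integrableOn hint θ 0 (2 * π)
  have htrR : ∀ φ, Integrable (fun θ => f (θ - φ)) μ :=
    fun φ => translate_integrableOn_right hint φ a (a + h)
  have hfμ : Integrable f μ := translate_integrableOn_right hint 0 a (a + h) |>.congr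
    (ae_of_all _ fun θ => by simp)
  have hPf : ∀ θ, Integrable (fun φ => P φ * f (θ - φ)) ν :=
    fun θ => (htr θ).bdd_mul hPcont.aestronglyMeasurable.restrict (ae_of_all _ hPbdd.choose_spec)
  -- pointwise representation of g
  have hconv : ∀ θ, poissonConv f r θ = ∫ φ, P φ * f (θ - φ) ∂ν := fun θ => by
    rw [poissonConv, intervalIntegral.integral_of_le h2π]
  have hgrep : ∀ θ, f θ - poissonConv f r θ = ∫ φ, P φ * (f θ - f (θ - φ)) ∂ν := by
    intro θ
    have hint1 : Integrable (fun φ => P φ * f θ) ν := hPν.mul_const (f θ)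
    have h1 : ∫ φ, P φ * (f θ - f (θ - φ)) ∂ν
        = (∫ φ, P φ * f θ ∂ν) - ∫ φ, P φ * f (θ - φ) ∂ν := by
      rw [← integral_sub hint1 (hPf θ)]
      congr 1; funext φ; ring
    rw [h1, integral_mul_const, hP1, one_mul, hconv θ]
  -- continuity of the shifted average A
  set F0 : ℝ → ℝ := fun x => ∫ t in (0:ℝ)..x, f t with hF0
  have hF0cont : Continuous F0 :=
    intervalIntegral.continuous_primitive (fun c d => loc_intervalIntegrable hint c d) 0
  set A : ℝ → ℝ := fun φ => circAvg f (a - φ) h with hA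
  have hAeq : ∀ φ, A φ = (F0 (a + h - φ) - F0 (a - φ)) / h := by
    intro φ
    have h1 := intervalIntegral.integral_interval_sub_left
      (loc_intervalIntegrable hint 0 (a + h - φ)) (loc_intervalIntegrable hint 0 (a - φ))
    simp only [hA, circAvg, hF0]
    rw [show a - φ + h = a + h - φ by ring, ← h1]
  have hAcont : Continuous A := by
    have : Continuous fun φ => (F0 (a + h - φ) - F0 (a - φ)) / h := by
      apply Continuous.div_const
      exact (hF0cont.comp (by fun_prop)).sub (hF0cont.comp (by fun_prop))
    exact this.congr fun φ => (hAeq φ).symm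
  -- shifted averages and oscillations
  have havg_shift : ∀ φ, (∫ θ, f (θ - φ) ∂μ) = h * A φ := by
    intro φ
    rw [hμ, ← intervalIntegral.integral_of_le hle,
      intervalIntegral.integral_comp_sub_right f φ]
    simp only [hA, circAvg]
    rw [show a - φ + h = a + h - φ by ring]
    field_simp
  have hosc_shift : ∀ φ, (∫ θ, |f (θ - φ) - A φ| ∂μ) = h * circOsc f (a - φ) h := by
    intro φ
    rw [hμ, ← intervalIntegral.integral_of_le hle,
      intervalIntegral.integral_comp_sub_right (fun t => |f t - A φ|) φ]
    simp only [circOsc, hA]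
    rw [show a - φ + h = a + h - φ by ring]
    field_simp
  have hosc0 : (∫ θ, |f θ - circAvg f a h| ∂μ) = h * circOsc f a h := by
    rw [hμ, ← intervalIntegral.integral_of_le hle]
    simp only [circOsc]
    field_simp
  -- independent-of-θ integrands
  have hg1 : ∀ θ, Integrable (fun φ => P φ * (f θ - f (θ - φ))) ν := fun θ =>
    ((hPν.mul_const (f θ)).sub (hPf θ)).congr (ae_of_all _ fun φ => by simp only [Pi.sub_apply]; ring)
  set cf := circAvg f a h with hcf
  have hAν : Integrable (fun φ => P φ * (cf - A φ)) ν :=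
    ((hPcont.mul (continuous_const.sub hAcont)).intervalIntegrable 0 (2 * π)).1
  -- product integrability
  have hPsnd : AEStronglyMeasurable (fun p : ℝ × ℝ => P p.2) (μ.prod ν) :=
    (hPcont.comp continuous_snd).aestronglyMeasurable
  have hPbdd2 : ∃ C, ∀ p : ℝ × ℝ, ‖P p.2‖ ≤ C := by
    obtain ⟨C, hC⟩ := hPbdd; exact ⟨C, fun p => hC p.2⟩
  have h2prod : Integrable (fun p : ℝ × ℝ => f (p.1 - p.2)) (μ.prod ν) :=
    prod_integrable hper hint a (a + h)
  have h1prod : Integrable (fun p : ℝ × ℝ => f p.1) (μ.prod ν) := by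
    have hq : Measure.QuasiMeasurePreserving (Prod.fst : ℝ × ℝ → ℝ) (μ.prod ν) μ := by
      refine ⟨measurable_fst, ?_⟩
      rw [Measure.map_fst_prod]
      refine Measure.AbsolutelyContinuous.mk fun s _ h0 => ?_
      simp [h0]
    have haesm : AEStronglyMeasurable (fun p : ℝ × ℝ => f p.1) (μ.prod ν) :=
      hfμ.aestronglyMeasurable.comp_quasiMeasurePreserving hq
    rw [integrable_prod_iff haesm]
    refine ⟨ae_of_all _ fun θ => (integrableOn_const measure_Ioc_lt_top.ne :
      IntegrableOn (fun _ => f θ) (Ioc (0:ℝ) (2 * π)) volume), ?_⟩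
    have hval : ∀ θ : ℝ, (∫ _φ, ‖f θ‖ ∂ν) = (ν univ).toReal * |f θ| := by
      intro θ; rw [integral_const]; simp [smul_eq_mul, Real.norm_eq_abs, Measure.real]
    exact (hfμ.abs.const_mul ((ν univ).toReal)).congr (ae_of_all _ fun θ => (hval θ).symm)
  have hH : Integrable (fun p : ℝ × ℝ => P p.2 * (f p.1 - f (p.1 - p.2))) (μ.prod ν) :=
    (h1prod.sub h2prod).bdd_mul hPsnd (ae_of_all _ hPbdd2.choose_spec)
  have huprod : Integrable (fun p : ℝ × ℝ => P p.2 * (cf - A p.2)) (μ.prod ν) := by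
    have haesm : AEStronglyMeasurable (fun p : ℝ × ℝ => P p.2 * (cf - A p.2)) (μ.prod ν) :=
      ((hPcont.comp continuous_snd).mul
        (continuous_const.sub (hAcont.comp continuous_snd))).aestronglyMeasurable
    rw [integrable_prod_iff haesm]
    refine ⟨ae_of_all _ fun θ => hAν, ?_⟩
    have hval : ∀ θ : ℝ, (∫ φ, ‖P φ * (cf - A φ)‖ ∂ν) = ∫ φ, |P φ * (cf - A φ)| ∂ν := by
      intro θ
      simp only [Real.norm_eq_abs]
    exact (integrableOn_const measure_Ioc_lt_top.ne).congr
      (ae_of_all _ fun θ => (hval θ).symm)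
  have hKint : Integrable
      (fun p : ℝ × ℝ => P p.2 * ((f p.1 - cf) - (f (p.1 - p.2) - A p.2))) (μ.prod ν) :=
    (hH.sub huprod).congr (ae_of_all _ fun p => by simp only [Pi.sub_apply]; ring)
  have habsK : Integrable
      (fun p : ℝ × ℝ => P p.2 * |(f p.1 - cf) - (f (p.1 - p.2) - A p.2)|) (μ.prod ν) :=
    hKint.abs.congr (ae_of_all _ fun p => by
      simp only []
      rw [abs_mul, abs_of_nonneg (hP0 p.2)])
  -- average of g via Fubini
  have hfint_μ : (∫ θ, f θ ∂μ) = h * cf := by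
    rw [hcf, circAvg, hμ, ← intervalIntegral.integral_of_le hle]; field_simp
  have hgavg : circAvg (fun θ => f θ - poissonConv f r θ) a h
      = ∫ φ, P φ * (cf - A φ) ∂ν := by
    have h1 : circAvg (fun θ => f θ - poissonConv f r θ) a h
        = (∫ θ, (f θ - poissonConv f r θ) ∂μ) / h := by
      rw [circAvg, hμ, ← intervalIntegral.integral_of_le hle]
    have h2 : (∫ θ, (f θ - poissonConv f r θ) ∂μ)
        = ∫ θ, (∫ φ, P φ * (f θ - f (θ - φ)) ∂ν) ∂μ :=
      integral_congr_ae (ae_of_all _ fun θ => hgrep θ)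
    have h3 : (∫ θ, (∫ φ, P φ * (f θ - f (θ - φ)) ∂ν) ∂μ)
        = ∫ φ, (∫ θ, P φ * (f θ - f (θ - φ)) ∂μ) ∂ν :=
      integral_integral_swap hH
    have h4 : ∀ φ, (∫ θ, P φ * (f θ - f (θ - φ)) ∂μ) = h * (P φ * (cf - A φ)) := by
      intro φ
      rw [integral_const_mul]
      rw [integral_sub hfμ (htrR φ), hfint_μ, havg_shift φ]
      ring
    rw [h1, h2, h3]
    rw [integral_congr_ae (ae_of_all _ h4), integral_const_mul]
    field_simp
  -- pointwise difference representation
  have hdiff : ∀ θ, (f θ - poissonConv f r θ) - circAvg (fun θ => f θ - poissonConv f r θ) a h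
      = ∫ φ, P φ * ((f θ - cf) - (f (θ - φ) - A φ)) ∂ν := by
    intro θ
    rw [hgrep θ, hgavg, ← integral_sub (hg1 θ) hAν]
    congr 1; funext φ; ring
  -- pointwise bound
  set W : ℝ → ℝ := fun θ => ∫ φ, P φ * |(f θ - cf) - (f (θ - φ) - A φ)| ∂ν with hW
  have hWint : Integrable W μ := by
    have h5 := habsK.integral_prod_left
    exact h5
  have hptb : ∀ θ,
      |(f θ - poissonConv f r θ) - circAvg (fun θ => f θ - poissonConv f r θ) a h| ≤ W θ := by
    intro θ
    rw [hdiff θ]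
    calc |∫ φ, P φ * ((f θ - cf) - (f (θ - φ) - A φ)) ∂ν|
        ≤ ∫ φ, |P φ * ((f θ - cf) - (f (θ - φ) - A φ))| ∂ν := by
          have hni := norm_integral_le_integral_norm (μ := ν)
            (fun φ => P φ * ((f θ - cf) - (f (θ - φ) - A φ)))
          simpa [Real.norm_eq_abs, abs_mul] using hni
      _ = W θ := by
          rw [hW]
          congr 1; funext φ
          rw [abs_mul, abs_of_nonneg (hP0 φ)]
  have hstep1 : (∫ θ, |(f θ - poissonConv f r θ)
        - circAvg (fun θ => f θ - poissonConv f r θ) a h| ∂μ) ≤ ∫ θ, W θ ∂μ :=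
    integral_mono_of_nonneg (ae_of_all _ fun θ => abs_nonneg _) hWint (ae_of_all _ hptb)
  have hswap2 : (∫ θ, W θ ∂μ)
      = ∫ φ, (∫ θ, P φ * |(f θ - cf) - (f (θ - φ) - A φ)| ∂μ) ∂ν :=
    integral_integral_swap habsK
  have hBnonneg : 0 ≤ B := le_trans (circOsc_nonneg f a h hh) (hB a)
  have hinner : ∀ φ,
      (∫ θ, P φ * |(f θ - cf) - (f (θ - φ) - A φ)| ∂μ) ≤ P φ * (2 * B * h) := by
    intro φ
    rw [integral_const_mul]
    refine mul_le_mul_of_nonneg_left ?_ (hP0 φ)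
    have hconstμ : ∀ c : ℝ, Integrable (fun _ : ℝ => c) μ :=
      fun c => integrableOn_const measure_Ioc_lt_top.ne
    have hint1 : Integrable (fun θ => |f θ - cf|) μ := (hfμ.sub (hconstμ cf)).abs
    have hint2 : Integrable (fun θ => |f (θ - φ) - A φ|) μ := ((htrR φ).sub (hconstμ (A φ))).abs
    have hintL : Integrable (fun θ => |(f θ - cf) - (f (θ - φ) - A φ)|) μ :=
      ((hfμ.sub (hconstμ cf)).sub ((htrR φ).sub (hconstμ (A φ)))).abs
    calc (∫ θ, |(f θ - cf) - (f (θ - φ) - A φ)| ∂μ)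
        ≤ ∫ θ, (|f θ - cf| + |f (θ - φ) - A φ|) ∂μ :=
          integral_mono hintL (hint1.add hint2) (fun θ => abs_sub _ _)
      _ = (∫ θ, |f θ - cf| ∂μ) + ∫ θ, |f (θ - φ) - A φ| ∂μ := integral_add hint1 hint2
      _ = h * circOsc f a h + h * circOsc f (a - φ) h := by rw [hosc0, hosc_shift φ]
      _ ≤ h * B + h * B := by
          have := hB a
          have := hB (a - φ)
          gcongr <;> assumption
      _ = 2 * B * h := by ring
  have hstep2 : (∫ φ, (∫ θ, P φ * |(f θ - cf) - (f (θ - φ) - A φ)| ∂μ) ∂ν)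
      ≤ ∫ φ, P φ * (2 * B * h) ∂ν := by
    refine integral_mono_of_nonneg (ae_of_all _ fun φ => ?_) (hPν.mul_const _)
      (ae_of_all _ hinner)
    exact integral_nonneg fun θ => mul_nonneg (hP0 φ) (abs_nonneg _)
  have hstep3 : (∫ φ, P φ * (2 * B * h) ∂ν) = 2 * B * h := by
    rw [integral_mul_const, hP1, one_mul]
  rw [circOsc, intervalIntegral.integral_of_le hle, div_le_iff₀ hh]
  calc (∫ θ in Ioc a (a + h),
        |(f θ - poissonConv f r θ) - circAvg (fun θ => f θ - poissonConv f r θ) a h|)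
      ≤ ∫ θ, W θ ∂μ := hstep1
    _ = ∫ φ, (∫ θ, P φ * |(f θ - cf) - (f (θ - φ) - A φ)| ∂μ) ∂ν := hswap2
    _ ≤ ∫ φ, P φ * (2 * B * h) ∂ν := hstep2
    _ = 2 * B * h := hstep3

lemma conv_periodic (f : ℝ → ℝ) (r : ℝ) (hper : Function.Periodic f (2 * π)) :
    Function.Periodic (poissonConv f r) (2 * π) := by
  intro θ
  rw [poissonConv, poissonConv]
  refine intervalIntegral.integral_congr fun φ _ => ?_
  rw [show θ + 2 * π - φ = (θ - φ) + 2 * π by ring, hper]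

lemma conv_integrableOn (f : ℝ → ℝ) (r : ℝ) (hper : Function.Periodic f (2 * π))
    (hint : LocallyIntegrable f volume) (hr0 : 0 < r) (hr1 : r < 1) (c d : ℝ) :
    IntegrableOn (poissonConv f r) (Ioc c d) volume := by
  have hπ := Real.pi_pos
  have h2π : (0:ℝ) ≤ 2 * π := by positivity
  have hP0 := poissonCirc_nonneg hr0 hr1
  have hPbdd : ∃ C, ∀ p : ℝ × ℝ, ‖poissonCirc r p.2‖ ≤ C :=
    ⟨(1 - r ^ 2) / (2 * π * (1 - r) ^ 2), fun p => by
      rw [Real.norm_eq_abs, abs_of_nonneg (hP0 p.2)]; exact poissonCirc_le hr0 hr1 p.2⟩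
  have hprod : Integrable (fun p : ℝ × ℝ => poissonCirc r p.2 * f (p.1 - p.2))
      ((volume.restrict (Ioc c d)).prod (volume.restrict (Ioc (0:ℝ) (2 * π)))) :=
    (prod_integrable hper hint c d).bdd_mul
      (((poissonCirc_continuous hr0 hr1).comp continuous_snd).aestronglyMeasurable) (ae_of_all _ hPbdd.choose_spec)
  have h5 := hprod.integral_prod_left
  refine h5.congr (ae_of_all _ fun θ => ?_)
  rw [poissonConv, intervalIntegral.integral_of_le h2π]

lemma conv_locallyIntegrable (f : ℝ → ℝ) (r : ℝ) (hper : Function.Periodic f (2 * π))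
    (hint : LocallyIntegrable f volume) (hr0 : 0 < r) (hr1 : r < 1) :
    LocallyIntegrable (poissonConv f r) volume := by
  intro x
  have hπ3 := Real.pi_gt_three
  refine ⟨Ioo (x - 1) (x + 1), Ioo_mem_nhds (by linarith) (by linarith), ?_⟩
  have hsub : Ioo (x - 1) (x + 1) ⊆ Ioc (x - 2) ((x - 2) + 2 * π) := fun y hy =>
    ⟨by linarith [hy.1], by linarith [hy.2]⟩
  exact (conv_integrableOn f r hper hint hr0 hr1 (x - 2) ((x - 2) + 2 * π)).mono_set hsub

/-- For `f ∈ L¹(𝕊)` and `f⁽¹⁾ = f - P_r * f`, the mean oscillation of `f⁽¹⁾` over any arc `I`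
is at most twice the supremum of the mean oscillations of `f` over arcs of the same length.
Consequently, if `f ∈ VMO(𝕊)` then `f⁽¹⁾ ∈ VMO(𝕊)`. -/
theorem osc_sub_poissonConv (f : ℝ → ℝ) (r : ℝ) (hper : Function.Periodic f (2 * π))
    (hint : LocallyIntegrable f) (hr0 : 0 < r) (hr1 : r < 1) :
    (∀ a h B, 0 < h → h ≤ 2 * π → (∀ a', circOsc f a' h ≤ B) →
        circOsc (fun θ => f θ - poissonConv f r θ) a h ≤ 2 * B) ∧
      (IsVMOS f → IsVMOS (fun θ => f θ - poissonConv f r θ)) := by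
  constructor
  · intro a h B hh _ hB
    exact key_osc f r hper hint hr0 hr1 a h B hh hB
  · rintro ⟨⟨-, -, C, hC⟩, hvmo⟩
    refine ⟨⟨fun θ => by simp [hper θ, conv_periodic f r hper θ], ?_, ?_⟩, ?_⟩
    · exact hint.sub (conv_locallyIntegrable f r hper hint hr0 hr1)
    · exact ⟨2 * C, fun a h hh h2π =>
        key_osc f r hper hint hr0 hr1 a h C hh (fun a' => hC a' h hh h2π)⟩
    · intro ε hε
      obtain ⟨δ, hδ0, hδ⟩ := hvmo (ε / 2) (by linarith)
      refine ⟨δ, hδ0, fun a h hh hhd => ?_⟩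
      have := key_osc f r hper hint hr0 hr1 a h (ε / 2) hh (fun a' => hδ a' h hh hhd)
      linarith
end

section
/- For φ ∈ BMO(ℝ^n), φ ∈ VMO(ℝ^n) if and only if φ lies in the BMO-closure of UC(ℝ^n) ∩ BMO(ℝ^n), the uniformly continuous functions of bounded mean oscillation. -/
open MeasureTheory Real Set Filter
open scoped ENNReal NNReal

/-- Open axis-parallel cube with corner `c` and side length `l`. -/
def cube {n : ℕ} (c : EuclideanSpace ℝ (Fin n)) (l : ℝ) : Set (EuclideanSpace ℝ (Fin n)) :=
  {x | ∀ i, x i ∈ Set.Ioo (c i) (c i + l)}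

/-- Mean of `f` over the cube with corner `c` and side length `l`. -/
noncomputable def cubeAvg {n : ℕ} (f : EuclideanSpace ℝ (Fin n) → ℝ)
    (c : EuclideanSpace ℝ (Fin n)) (l : ℝ) : ℝ :=
  (∫ x in cube c l, f x) / l ^ n

/-- Mean oscillation of `f` over the cube with corner `c` and side length `l`. -/
noncomputable def cubeOsc {n : ℕ} (f : EuclideanSpace ℝ (Fin n) → ℝ)
    (c : EuclideanSpace ℝ (Fin n)) (l : ℝ) : ℝ :=
  (∫ x in cube c l, |f x - cubeAvg f c l|) / l ^ n

/-- `f ∈ BMO(ℝⁿ)`. -/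
def IsBMO {n : ℕ} (f : EuclideanSpace ℝ (Fin n) → ℝ) : Prop :=
  LocallyIntegrable f ∧ ∃ C, ∀ c l, 0 < l → cubeOsc f c l ≤ C

/-- `f ∈ VMO(ℝⁿ)`. -/
def IsVMO {n : ℕ} (f : EuclideanSpace ℝ (Fin n) → ℝ) : Prop :=
  IsBMO f ∧ ∀ ε > (0 : ℝ), ∃ δ > (0 : ℝ), ∀ c l, 0 < l → l ≤ δ → cubeOsc f c l ≤ ε

/-- The `BMO` seminorm `‖f‖_*`. -/
noncomputable def bmoNorm {n : ℕ} (f : EuclideanSpace ℝ (Fin n) → ℝ) : ℝ :=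
  sInf {C : ℝ | 0 ≤ C ∧ ∀ c l, 0 < l → cubeOsc f c l ≤ C}

variable {n : ℕ}

lemma cube_eq_preimage (c : EuclideanSpace ℝ (Fin n)) (l : ℝ) :
    cube c l = (MeasurableEquiv.toLp 2 (Fin n → ℝ)).symm ⁻¹' (univ.pi fun i => Ioo (c i) (c i + l)) := by
  ext x; simp [cube, MeasurableEquiv.coe_toLp_symm, Set.mem_pi]

lemma volume_cube (c : EuclideanSpace ℝ (Fin n)) (l : ℝ) :
    volume (cube c l) = ENNReal.ofReal l ^ n := by
  rw [cube_eq_preimage,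
    (EuclideanSpace.volume_preserving_symm_measurableEquiv_toLp (Fin n)).measure_preimage ((MeasurableSet.univ_pi fun i => measurableSet_Ioo).nullMeasurableSet)]
  rw [volume_pi_pi]
  simp [Real.volume_Ioo]

lemma isOpen_cube (c : EuclideanSpace ℝ (Fin n)) (l : ℝ) : IsOpen (cube c l) := by
  have : cube c l = ⋂ i, (fun x : EuclideanSpace ℝ (Fin n) => x i) ⁻¹' (Ioo (c i) (c i + l)) := by
    ext x; simp [cube]
  rw [this]
  exact isOpen_iInter_of_finite fun i => (isOpen_Ioo).preimage (by fun_prop)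

lemma measurableSet_cube (c : EuclideanSpace ℝ (Fin n)) (l : ℝ) : MeasurableSet (cube c l) :=
  (isOpen_cube c l).measurableSet

lemma cube_subset_cube {c c' : EuclideanSpace ℝ (Fin n)} {l l' : ℝ}
    (h : ∀ i, c' i ≤ c i ∧ c i + l ≤ c' i + l') : cube c l ⊆ cube c' l' := by
  intro x hx i
  exact ⟨lt_of_le_of_lt (h i).1 (hx i).1, lt_of_lt_of_le (hx i).2 (h i).2⟩

lemma cube_subset_closedBall (c : EuclideanSpace ℝ (Fin n)) {l : ℝ} (hl : 0 ≤ l) :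
    cube c l ⊆ Metric.closedBall c (Real.sqrt (n * l ^ 2)) := by
  intro x hx
  simp only [Metric.mem_closedBall, EuclideanSpace.dist_eq]
  apply Real.sqrt_le_sqrt
  calc ∑ i, dist (x i) (c i) ^ 2 ≤ ∑ _i : Fin n, l ^ 2 := by
        apply Finset.sum_le_sum; intro i _
        have h1 := (hx i).1; have h2 := (hx i).2
        have : |x i - c i| ≤ l := by rw [abs_le]; constructor <;> nlinarith
        calc dist (x i) (c i) ^ 2 = |x i - c i| ^ 2 := by rw [Real.dist_eq]
          _ ≤ l ^ 2 := by nlinarith [abs_nonneg (x i - c i)]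
    _ = n * l ^ 2 := by simp [Finset.sum_const, mul_comm]

lemma isCompact_closure_cube (c : EuclideanSpace ℝ (Fin n)) {l : ℝ} (hl : 0 ≤ l) :
    IsCompact (closure (cube c l)) := by
  apply Metric.isCompact_of_isClosed_isBounded isClosed_closure
  exact (Metric.isBounded_closedBall.subset (cube_subset_closedBall c hl)).closure

lemma IntegrableOn_cube {f : EuclideanSpace ℝ (Fin n) → ℝ} (hf : LocallyIntegrable f)
    (c : EuclideanSpace ℝ (Fin n)) {l : ℝ} (hl : 0 ≤ l) : IntegrableOn f (cube c l) :=
  (hf.integrableOn_isCompact (isCompact_closure_cube c hl)).mono_set subset_closure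

lemma cube_nonempty (c : EuclideanSpace ℝ (Fin n)) {l : ℝ} (hl : 0 < l) :
    (cube c l).Nonempty := by
  refine ⟨WithLp.toLp 2 (fun i => c i + l / 2), fun i => ⟨by simp only [PiLp.toLp_apply, WithLp.ofLp_toLp]; linarith, by simp only [PiLp.toLp_apply, WithLp.ofLp_toLp]; linarith⟩⟩


section Lemmas
variable {n : ℕ} {f g : EuclideanSpace ℝ (Fin n) → ℝ} {c : EuclideanSpace ℝ (Fin n)} {l : ℝ}

lemma volume_cube_lt_top (c : EuclideanSpace ℝ (Fin n)) (l : ℝ) : volume (cube c l) < ⊤ := by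
  rw [volume_cube]; exact ENNReal.pow_lt_top ENNReal.ofReal_lt_top

lemma volume_cube_toReal (c : EuclideanSpace ℝ (Fin n)) {l : ℝ} (hl : 0 ≤ l) :
    (volume (cube c l)).toReal = l ^ n := by
  rw [volume_cube, ENNReal.toReal_pow, ENNReal.toReal_ofReal hl]

lemma setIntegral_const_cube (c : EuclideanSpace ℝ (Fin n)) {l : ℝ} (hl : 0 ≤ l) (M : ℝ) :
    ∫ _x in cube c l, M = l ^ n * M := by
  rw [setIntegral_const, measureReal_def, volume_cube_toReal c hl, smul_eq_mul]

variable {f g : EuclideanSpace ℝ (Fin n) → ℝ} {c : EuclideanSpace ℝ (Fin n)} {l : ℝ}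

lemma integrableOn_cube_const {M : ℝ} : IntegrableOn (fun _ => M) (cube c l) :=
  integrableOn_const (volume_cube_lt_top c l).ne

lemma cubeAvg_sub_const (hf : IntegrableOn f (cube c l)) (hl : 0 < l) (M : ℝ) :
    cubeAvg f c l - M = (∫ x in cube c l, (f x - M)) / l ^ n := by
  rw [integral_sub hf integrableOn_cube_const, setIntegral_const_cube c hl.le]
  have hln : (l : ℝ) ^ n ≠ 0 := by positivity
  unfold cubeAvg; rw [sub_div, mul_div_cancel_left₀ _ hln]

lemma abs_cubeAvg_sub_const_le (hf : IntegrableOn f (cube c l)) (hl : 0 < l) (M : ℝ) :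
    |cubeAvg f c l - M| ≤ (∫ x in cube c l, |f x - M|) / l ^ n := by
  rw [cubeAvg_sub_const hf hl M, abs_div, abs_of_pos (show (0:ℝ) < l ^ n by positivity)]
  gcongr
  calc |∫ x in cube c l, (f x - M)| = ‖∫ x in cube c l, (f x - M)‖ := (Real.norm_eq_abs _).symm
    _ ≤ ∫ x in cube c l, ‖f x - M‖ := norm_integral_le_integral_norm _
    _ = ∫ x in cube c l, |f x - M| := by simp [Real.norm_eq_abs]

lemma cubeOsc_nonneg : 0 ≤ cubeOsc f c l := by
  unfold cubeOsc
  rcases le_or_gt l 0 with h | h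
  · rcases lt_or_eq_of_le h with h' | h'
    · rcases Nat.eq_zero_or_pos n with hn | hn
      · subst hn; simp only [pow_zero]
        apply div_nonneg (integral_nonneg fun x => abs_nonneg _) zero_le_one
      · have : cube c l = ∅ := by
          ext x; simp only [cube, mem_setOf_eq, mem_empty_iff_false, iff_false]
          push_neg
          refine ⟨⟨0, hn⟩, ?_⟩
          intro hmem
          have := hmem.1.trans hmem.2; linarith
        simp [this]
    · subst h'
      rcases Nat.eq_zero_or_pos n with hn | hn
      · subst hn; simp only [pow_zero]
        apply div_nonneg (integral_nonneg fun x => abs_nonneg _) zero_le_one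
      · rw [zero_pow (by omega)]
        simp
  · apply div_nonneg (integral_nonneg fun x => abs_nonneg _) (by positivity)

lemma cubeOsc_le_of_forall (hl : 0 < l) (hint : IntegrableOn (fun x => |f x - cubeAvg f c l|) (cube c l))
    {M : ℝ} (h : ∀ x ∈ cube c l, |f x - cubeAvg f c l| ≤ M) :
    cubeOsc f c l ≤ M := by
  have hV : (0:ℝ) < l ^ n := by positivity
  have : ∫ x in cube c l, |f x - cubeAvg f c l| ≤ l ^ n * M := by
    calc ∫ x in cube c l, |f x - cubeAvg f c l| ≤ ∫ _x in cube c l, M :=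
          setIntegral_mono_on hint integrableOn_cube_const (measurableSet_cube c l) h
      _ = l ^ n * M := setIntegral_const_cube c hl.le M
  rw [cubeOsc, div_le_iff₀ hV]; linarith

lemma cubeOsc_le_two_avg (hf : IntegrableOn f (cube c l)) (hl : 0 < l) (a : ℝ) :
    cubeOsc f c l ≤ 2 * ((∫ x in cube c l, |f x - a|) / l ^ n) := by
  have hV : (0:ℝ) < l ^ n := by positivity
  have hint : IntegrableOn (fun x => |f x - cubeAvg f c l|) (cube c l) :=
    (hf.sub integrableOn_cube_const).abs
  have hfa : IntegrableOn (fun x => |f x - a|) (cube c l) :=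
    (hf.sub integrableOn_cube_const).abs
  have havg : |cubeAvg f c l - a| ≤ (∫ x in cube c l, |f x - a|) / l ^ n :=
    abs_cubeAvg_sub_const_le hf hl a
  set I := ∫ x in cube c l, |f x - a| with hI
  have h1 : ∫ x in cube c l, |f x - cubeAvg f c l| ≤ I + l ^ n * |cubeAvg f c l - a| := by
    have hptwise : ∀ x ∈ cube c l, |f x - cubeAvg f c l| ≤ |f x - a| + |cubeAvg f c l - a| := by
      intro x _
      calc |f x - cubeAvg f c l| = |(f x - a) - (cubeAvg f c l - a)| := by ring_nf
        _ ≤ |f x - a| + |cubeAvg f c l - a| := abs_sub _ _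
    have hsum : IntegrableOn (fun x => |f x - a| + |cubeAvg f c l - a|) (cube c l) :=
      hfa.add integrableOn_cube_const
    calc ∫ x in cube c l, |f x - cubeAvg f c l|
        ≤ ∫ x in cube c l, (|f x - a| + |cubeAvg f c l - a|) :=
          setIntegral_mono_on hint hsum (measurableSet_cube c l) hptwise
      _ = I + l ^ n * |cubeAvg f c l - a| := by
          rw [integral_add hfa integrableOn_cube_const, setIntegral_const_cube c hl.le]
  have h2 : l ^ n * |cubeAvg f c l - a| ≤ I := by
    have := mul_le_mul_of_nonneg_left havg hV.le
    rwa [mul_div_cancel₀ _ hV.ne'] at this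
  have h3 : (I / l ^ n) * l ^ n = I := div_mul_cancel₀ _ hV.ne'
  rw [cubeOsc, div_le_iff₀ hV]
  nlinarith

lemma cubeOsc_add_le (hf : IntegrableOn f (cube c l)) (hg : IntegrableOn g (cube c l)) (hl : 0 < l) :
    cubeOsc (fun x => f x + g x) c l ≤ cubeOsc f c l + cubeOsc g c l := by
  have hV : (0:ℝ) < l ^ n := by positivity
  have havg : cubeAvg (fun x => f x + g x) c l = cubeAvg f c l + cubeAvg g c l := by
    unfold cubeAvg; rw [integral_add hf hg, add_div]
  have hif : IntegrableOn (fun x => |f x - cubeAvg f c l|) (cube c l) :=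
    (hf.sub integrableOn_cube_const).abs
  have hig : IntegrableOn (fun x => |g x - cubeAvg g c l|) (cube c l) :=
    (hg.sub integrableOn_cube_const).abs
  have hifg : IntegrableOn
      (fun x => |f x + g x - cubeAvg (fun x => f x + g x) c l|) (cube c l) :=
    ((hf.add hg).sub integrableOn_cube_const).abs
  have hsum : IntegrableOn
      (fun x => |f x - cubeAvg f c l| + |g x - cubeAvg g c l|) (cube c l) := hif.add hig
  have h : ∫ x in cube c l, |f x + g x - cubeAvg (fun x => f x + g x) c l| ≤
      (∫ x in cube c l, |f x - cubeAvg f c l|) + ∫ x in cube c l, |g x - cubeAvg g c l| := by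
    rw [← integral_add hif hig]
    apply setIntegral_mono_on hifg hsum (measurableSet_cube c l)
    intro x _
    rw [havg]
    calc |f x + g x - (cubeAvg f c l + cubeAvg g c l)|
        = |(f x - cubeAvg f c l) + (g x - cubeAvg g c l)| := by ring_nf
      _ ≤ _ := abs_add_le _ _
  unfold cubeOsc
  rw [← add_div, div_le_div_iff_of_pos_right hV]
  exact h

lemma cubeAvg_neg : cubeAvg (fun x => -f x) c l = -cubeAvg f c l := by
  unfold cubeAvg; rw [integral_neg, neg_div]

lemma cubeOsc_neg : cubeOsc (fun x => -f x) c l = cubeOsc f c l := by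
  unfold cubeOsc
  congr 1
  apply setIntegral_congr_fun (measurableSet_cube c l)
  intro x _
  show |(-f x) - cubeAvg (fun x => -f x) c l| = |f x - cubeAvg f c l|
  rw [cubeAvg_neg]
  rw [show (-f x) - -cubeAvg f c l = -(f x - cubeAvg f c l) by ring, abs_neg]

lemma volume_coord_eq_zero (i : Fin n) (a : ℝ) :
    volume {y : EuclideanSpace ℝ (Fin n) | y i = a} = 0 := by
  have h1 : {y : EuclideanSpace ℝ (Fin n) | y i = a} =
      (MeasurableEquiv.toLp 2 (Fin n → ℝ)).symm ⁻¹'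
        (univ.pi fun j => if j = i then ({a} : Set ℝ) else univ) := by
    ext y
    simp only [mem_setOf_eq, mem_preimage, Set.mem_pi, mem_univ, forall_true_left]
    constructor
    · intro h j
      by_cases hj : j = i <;> simp [hj, MeasurableEquiv.coe_toLp_symm, h]
    · intro h
      have := h i
      simpa [MeasurableEquiv.coe_toLp_symm] using this
  rw [h1, (EuclideanSpace.volume_preserving_symm_measurableEquiv_toLp (Fin n)).measure_preimage
    ((MeasurableSet.univ_pi fun j => by
      by_cases hj : j = i <;> simp [hj] <;> exact measurableSet_singleton a).nullMeasurableSet)]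
  rw [volume_pi_pi]
  apply Finset.prod_eq_zero (Finset.mem_univ i)
  simp

lemma continuous_avgFn {φ : EuclideanSpace ℝ (Fin n) → ℝ} (hφ : LocallyIntegrable φ)
    {δ : ℝ} (hδ : 0 < δ) : Continuous (fun x => cubeAvg φ x δ) := by
  have key : Continuous (fun x => ∫ y in cube x δ, φ y) := by
    rw [continuous_iff_continuousAt]
    intro x₀
    have hrw : ∀ x : EuclideanSpace ℝ (Fin n),
        (∫ y in cube x δ, φ y) = ∫ y, (cube x δ).indicator φ y := fun x =>
      (integral_indicator (measurableSet_cube x δ)).symm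
    simp only [hrw]
    set K := Metric.closedBall x₀ (1 + Real.sqrt (n * δ ^ 2)) with hK
    apply continuousAt_of_dominated (bound := K.indicator fun y => |φ y|)
    · exact Eventually.of_forall fun x =>
        (hφ.aestronglyMeasurable).indicator (measurableSet_cube x δ)
    · have hball : ∀ᶠ x in nhds x₀, x ∈ Metric.closedBall x₀ 1 :=
        Filter.eventually_of_mem (Metric.closedBall_mem_nhds x₀ one_pos) fun x hx => hx
      filter_upwards [hball] with x hx
      apply Filter.Eventually.of_forall
      intro y
      by_cases hy : y ∈ cube x δ
      · have hyK : y ∈ K := by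
          have h1 : y ∈ Metric.closedBall x (Real.sqrt (n * δ ^ 2)) :=
            cube_subset_closedBall x hδ.le hy
          simp only [Metric.mem_closedBall] at *
          calc dist y x₀ ≤ dist y x + dist x x₀ := dist_triangle _ _ _
            _ ≤ Real.sqrt (n * δ ^ 2) + 1 := by
                have := Metric.mem_closedBall.1 hx; gcongr
            _ = 1 + Real.sqrt (n * δ ^ 2) := by ring
        rw [indicator_of_mem hy, indicator_of_mem hyK]
        simp [Real.norm_eq_abs]
      · rw [indicator_of_notMem hy]
        simp only [norm_zero]
        exact indicator_nonneg (fun y _ => abs_nonneg _) y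
    · have : IntegrableOn (fun y => |φ y|) K :=
        (hφ.integrableOn_isCompact (isCompact_closedBall x₀ _)).abs
      exact this.integrable_indicator (measurableSet_closedBall)
    · -- a.e. continuity in x
      have hN : volume (⋃ i : Fin n, ({y : EuclideanSpace ℝ (Fin n) | y i = x₀ i} ∪
          {y | y i = x₀ i + δ})) = 0 := by
        rw [measure_iUnion_null_iff]
        intro i
        rw [measure_union_null_iff]
        exact ⟨volume_coord_eq_zero i (x₀ i), volume_coord_eq_zero i (x₀ i + δ)⟩
      rw [← compl_mem_ae_iff] at hN
      filter_upwards [hN] with y hy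
      simp only [mem_compl_iff, mem_iUnion, mem_union, mem_setOf_eq, not_exists, not_or] at hy
      by_cases hmem : y ∈ cube x₀ δ
      · -- locally, y ∈ cube x δ
        have hopen : IsOpen {x : EuclideanSpace ℝ (Fin n) | y ∈ cube x δ} := by
          have : {x : EuclideanSpace ℝ (Fin n) | y ∈ cube x δ} =
              ⋂ i, ({x : EuclideanSpace ℝ (Fin n) | x i < y i} ∩ {x | y i - δ < x i}) := by
            ext x
            simp only [mem_setOf_eq, mem_iInter, mem_inter_iff, cube, Set.mem_Ioo]
            constructor
            · intro h i; exact ⟨(h i).1, by linarith [(h i).2]⟩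
            · intro h i; exact ⟨(h i).1, by linarith [(h i).2]⟩
          rw [this]
          exact isOpen_iInter_of_finite fun i =>
            ((isOpen_lt (by fun_prop) continuous_const).inter
              (isOpen_lt continuous_const (by fun_prop)))
        apply ContinuousAt.congr (continuousAt_const (y := φ y))
        filter_upwards [hopen.mem_nhds hmem] with x hx
        rw [indicator_of_mem hx]
      · -- locally, y ∉ cube x δ
        have : ∃ i, x₀ i ≤ y i - δ ∨ y i ≤ x₀ i := by
          by_contra hc
          push_neg at hc
          exact hmem fun i => ⟨(hc i).2, by linarith [(hc i).1]⟩
        obtain ⟨i, hi⟩ := this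
        have hi' : x₀ i < y i - δ ∨ y i < x₀ i := by
          rcases hi with h | h
          · left; rcases lt_or_eq_of_le h with h' | h' 
            · exact h'
            · exact absurd (by linarith : y i = x₀ i + δ) (hy i).2
          · right; rcases lt_or_eq_of_le h with h' | h'
            -- h' : y i = x₀ i
            · exact h'
            · exact absurd h' (hy i).1
        have hopen : ∃ U : Set (EuclideanSpace ℝ (Fin n)), IsOpen U ∧ x₀ ∈ U ∧
            ∀ x ∈ U, y ∉ cube x δ := by
          rcases hi' with h | h
          · refine ⟨{x | x i < y i - δ}, isOpen_lt (by fun_prop) continuous_const, h, ?_⟩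
            intro x hx hmem'
            have := (hmem' i).2
            simp only [mem_setOf_eq] at hx
            linarith
          · refine ⟨{x | y i < x i}, isOpen_lt continuous_const (by fun_prop), h, ?_⟩
            intro x hx hmem'
            have := (hmem' i).1
            simp only [mem_setOf_eq] at hx
            linarith
        obtain ⟨U, hU, hx₀U, hUprop⟩ := hopen
        apply ContinuousAt.congr (continuousAt_const (y := (0:ℝ)))
        filter_upwards [hU.mem_nhds hx₀U] with x hx
        rw [indicator_of_notMem (hUprop x hx)]
  unfold cubeAvg
  exact key.div_const _


lemma abs_sub_cubeAvg_le (hf : IntegrableOn f (cube c l)) (hl : 0 < l) {x : EuclideanSpace ℝ (Fin n)}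
    {M : ℝ} (h : ∀ y ∈ cube c l, |f y - f x| ≤ M) : |f x - cubeAvg f c l| ≤ M := by
  have hV : (0:ℝ) < l ^ n := by positivity
  have h1 : |cubeAvg f c l - f x| ≤ (∫ y in cube c l, |f y - f x|) / l ^ n :=
    abs_cubeAvg_sub_const_le hf hl (f x)
  have hint : IntegrableOn (fun y => |f y - f x|) (cube c l) :=
    (hf.sub integrableOn_cube_const).abs
  have h2 : ∫ y in cube c l, |f y - f x| ≤ l ^ n * M := by
    calc ∫ y in cube c l, |f y - f x| ≤ ∫ _y in cube c l, M :=
          setIntegral_mono_on hint integrableOn_cube_const (measurableSet_cube c l) h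
      _ = l ^ n * M := setIntegral_const_cube c hl.le M
  rw [abs_sub_comm]
  calc |cubeAvg f c l - f x| ≤ (∫ y in cube c l, |f y - f x|) / l ^ n := h1
    _ ≤ (l ^ n * M) / l ^ n := by gcongr
    _ = M := by field_simp

lemma cubeOsc_le_of_pairwise (hf : IntegrableOn f (cube c l)) (hl : 0 < l) {M : ℝ}
    (h : ∀ x ∈ cube c l, ∀ y ∈ cube c l, |f x - f y| ≤ M) : cubeOsc f c l ≤ M := by
  apply cubeOsc_le_of_forall hl ((hf.sub integrableOn_cube_const).abs)
  intro x hx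
  exact abs_sub_cubeAvg_le hf hl (fun y hy => h y hy x hx)

/-- Lemma A : average over small cube vs. average over containing cube. -/
lemma abs_cubeAvg_sub_cubeAvg_le {b x : EuclideanSpace ℝ (Fin n)} {δ L : ℝ}
    (hδ : 0 < δ) (hL : 0 < L) (hsub : cube x δ ⊆ cube b L)
    (hf : IntegrableOn f (cube b L)) :
    |cubeAvg f x δ - cubeAvg f b L| ≤ (L ^ n / δ ^ n) * cubeOsc f b L := by
  have hVδ : (0:ℝ) < δ ^ n := by positivity
  have hVL : (0:ℝ) < L ^ n := by positivity
  have hfδ : IntegrableOn f (cube x δ) := hf.mono_set hsub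
  have h1 : |cubeAvg f x δ - cubeAvg f b L| ≤
      (∫ y in cube x δ, |f y - cubeAvg f b L|) / δ ^ n :=
    abs_cubeAvg_sub_const_le hfδ hδ _
  have h2 : (∫ y in cube x δ, |f y - cubeAvg f b L|) ≤
      ∫ y in cube b L, |f y - cubeAvg f b L| := by
    apply setIntegral_mono_set ((hf.sub integrableOn_cube_const).abs)
      (Filter.Eventually.of_forall fun y => abs_nonneg _) (HasSubset.Subset.eventuallyLE hsub)
  have h3 : (∫ y in cube b L, |f y - cubeAvg f b L|) = L ^ n * cubeOsc f b L := by
    rw [cubeOsc]; field_simp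
  calc |cubeAvg f x δ - cubeAvg f b L| ≤ (∫ y in cube x δ, |f y - cubeAvg f b L|) / δ ^ n := h1
    _ ≤ (L ^ n * cubeOsc f b L) / δ ^ n := by rw [← h3]; gcongr
    _ = (L ^ n / δ ^ n) * cubeOsc f b L := by ring


section Core
variable {φ : EuclideanSpace ℝ (Fin n) → ℝ} {δ ε' : ℝ}

/-- Lemma B : oscillation of the averaged function at scale `δ`. -/
lemma avgFn_osc (hφ : LocallyIntegrable φ) (hδ : 0 < δ) (hε' : 0 < ε')
    (hosc : ∀ c L, 0 < L → L ≤ 3*δ → cubeOsc φ c L ≤ ε')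
    {x x' : EuclideanSpace ℝ (Fin n)} (h : ∀ i, |x i - x' i| ≤ δ) :
    |cubeAvg φ x δ - cubeAvg φ x' δ| ≤ 2 * 2^n * ε' := by
  set b : EuclideanSpace ℝ (Fin n) := WithLp.toLp 2 (fun i => min (x i) (x' i)) with hb
  have hbx : cube x δ ⊆ cube b (2*δ) := by
    apply cube_subset_cube
    intro i
    have h1 := abs_le.1 (h i)
    constructor
    · exact min_le_left _ _
    · rcases le_total (x i) (x' i) with hc | hc
      · have : b i = x i := min_eq_left hc
        rw [this]; linarith
      · have : b i = x' i := min_eq_right hc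
        rw [this]; linarith
  have hbx' : cube x' δ ⊆ cube b (2*δ) := by
    apply cube_subset_cube
    intro i
    have h1 := abs_le.1 (h i)
    constructor
    · exact min_le_right _ _
    · rcases le_total (x i) (x' i) with hc | hc
      · have : b i = x i := min_eq_left hc
        rw [this]; linarith
      · have : b i = x' i := min_eq_right hc
        rw [this]; linarith
  have h2δ : (0:ℝ) < 2*δ := by linarith
  have hint : IntegrableOn φ (cube b (2*δ)) := IntegrableOn_cube hφ b h2δ.le
  have hosc2 : cubeOsc φ b (2*δ) ≤ ε' := hosc b (2*δ) h2δ (by linarith)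
  have hratio : ((2*δ)^n / δ^n : ℝ) = 2^n := by
    rw [mul_pow]; field_simp
  have e1 := abs_cubeAvg_sub_cubeAvg_le hδ h2δ hbx hint
  have e2 := abs_cubeAvg_sub_cubeAvg_le hδ h2δ hbx' hint
  rw [hratio] at e1 e2
  have p2 : (0:ℝ) < 2^n := by positivity
  have e1' : |cubeAvg φ x δ - cubeAvg φ b (2*δ)| ≤ 2^n * ε' := by
    calc |cubeAvg φ x δ - cubeAvg φ b (2*δ)| ≤ 2^n * cubeOsc φ b (2*δ) := e1
      _ ≤ 2^n * ε' := by gcongr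
  have e2' : |cubeAvg φ x' δ - cubeAvg φ b (2*δ)| ≤ 2^n * ε' := by
    calc |cubeAvg φ x' δ - cubeAvg φ b (2*δ)| ≤ 2^n * cubeOsc φ b (2*δ) := e2
      _ ≤ 2^n * ε' := by gcongr
  calc |cubeAvg φ x δ - cubeAvg φ x' δ|
      ≤ |cubeAvg φ x δ - cubeAvg φ b (2*δ)| + |cubeAvg φ x' δ - cubeAvg φ b (2*δ)| := by
        have := abs_sub (cubeAvg φ x δ - cubeAvg φ b (2*δ)) (cubeAvg φ x' δ - cubeAvg φ b (2*δ))
        calc |cubeAvg φ x δ - cubeAvg φ x' δ|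
            = |(cubeAvg φ x δ - cubeAvg φ b (2*δ)) - (cubeAvg φ x' δ - cubeAvg φ b (2*δ))| := by
              ring_nf
          _ ≤ _ := abs_sub _ _
    _ ≤ 2^n * ε' + 2^n * ε' := add_le_add e1' e2'
    _ = 2 * 2^n * ε' := by ring

/-- Lemma B2 : oscillation at scale `2δ` by chaining through the midpoint. -/
lemma avgFn_osc2 (hφ : LocallyIntegrable φ) (hδ : 0 < δ) (hε' : 0 < ε')
    (hosc : ∀ c L, 0 < L → L ≤ 3*δ → cubeOsc φ c L ≤ ε')
    {x x' : EuclideanSpace ℝ (Fin n)} (h : ∀ i, |x i - x' i| ≤ 2*δ) :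
    |cubeAvg φ x δ - cubeAvg φ x' δ| ≤ 4 * 2^n * ε' := by
  set z : EuclideanSpace ℝ (Fin n) := WithLp.toLp 2 (fun i => (x i + x' i)/2) with hz
  have h1 : ∀ i, |x i - z i| ≤ δ := by
    intro i
    have : x i - z i = (x i - x' i)/2 := by show x i - (x i + x' i)/2 = _; ring
    rw [this, abs_div]
    have := h i
    simp only [abs_two]
    linarith
  have h2 : ∀ i, |z i - x' i| ≤ δ := by
    intro i
    have : z i - x' i = (x i - x' i)/2 := by show (x i + x' i)/2 - x' i = _; ring
    rw [this, abs_div]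
    have := h i
    simp only [abs_two]
    linarith
  have e1 := avgFn_osc hφ hδ hε' hosc h1
  have e2 := avgFn_osc hφ hδ hε' hosc h2
  calc |cubeAvg φ x δ - cubeAvg φ x' δ|
      = |(cubeAvg φ x δ - cubeAvg φ z δ) + (cubeAvg φ z δ - cubeAvg φ x' δ)| := by ring_nf
    _ ≤ |cubeAvg φ x δ - cubeAvg φ z δ| + |cubeAvg φ z δ - cubeAvg φ x' δ| := abs_add_le _ _
    _ ≤ 2 * 2^n * ε' + 2 * 2^n * ε' := add_le_add e1 e2
    _ = 4 * 2^n * ε' := by ring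

/-- Lemma C : `|ψ - g|` is pointwise small, where `g = Aφ`, `ψ = A g`. -/
lemma avgFn_self_close (hφ : LocallyIntegrable φ) (hδ : 0 < δ) (hε' : 0 < ε')
    (hosc : ∀ c L, 0 < L → L ≤ 3*δ → cubeOsc φ c L ≤ ε')
    (x : EuclideanSpace ℝ (Fin n)) :
    |(fun y => cubeAvg φ y δ) x - cubeAvg (fun y => cubeAvg φ y δ) x δ| ≤ 2 * 2^n * ε' := by
  have hg : Continuous (fun y => cubeAvg φ y δ) := continuous_avgFn hφ hδ
  have hint : IntegrableOn (fun y => cubeAvg φ y δ) (cube x δ) :=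
    IntegrableOn_cube (hg.locallyIntegrable) x hδ.le
  apply abs_sub_cubeAvg_le hint hδ
  intro y hy
  apply avgFn_osc hφ hδ hε' hosc
  intro i
  obtain ⟨hy1, hy2⟩ := hy i
  rw [abs_le]
  constructor <;> linarith

/-- Lemma D : per-cell bound on `∫ |φ - g|` over a cell of side `2δ`. -/
lemma cell_bound (hφ : LocallyIntegrable φ) (hδ : 0 < δ) (hε' : 0 < ε')
    (hosc : ∀ c L, 0 < L → L ≤ 3*δ → cubeOsc φ c L ≤ ε')
    (b : EuclideanSpace ℝ (Fin n)) :
    ∫ y in cube b (2*δ), |φ y - cubeAvg φ y δ| ≤ 2 * 6^n * ε' * δ^n := by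
  have hg : Continuous (fun y => cubeAvg φ y δ) := continuous_avgFn hφ hδ
  have h2δ : (0:ℝ) < 2*δ := by linarith
  have h3δ : (0:ℝ) < 3*δ := by linarith
  set M := cubeAvg φ b (3*δ) with hM
  have hint3 : IntegrableOn φ (cube b (3*δ)) := IntegrableOn_cube hφ b h3δ.le
  have hsub23 : cube b (2*δ) ⊆ cube b (3*δ) :=
    cube_subset_cube (fun i => ⟨le_refl _, by linarith⟩)
  have hosc3 : cubeOsc φ b (3*δ) ≤ ε' := hosc b (3*δ) h3δ (le_refl _)
  have hpt : ∀ x ∈ cube b (2*δ), |φ x - cubeAvg φ x δ| ≤ |φ x - M| + 3^n * ε' := by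
    intro x hx
    have hsubx : cube x δ ⊆ cube b (3*δ) := by
      apply cube_subset_cube
      intro i
      exact ⟨(hx i).1.le, by linarith [(hx i).2]⟩
    have hgx : |cubeAvg φ x δ - M| ≤ 3^n * ε' := by
      have hratio : ((3*δ)^n / δ^n : ℝ) = 3^n := by rw [mul_pow]; field_simp
      have := abs_cubeAvg_sub_cubeAvg_le hδ h3δ hsubx hint3
      rw [hratio] at this
      calc |cubeAvg φ x δ - M| ≤ 3^n * cubeOsc φ b (3*δ) := this
        _ ≤ 3^n * ε' := by gcongr
    calc |φ x - cubeAvg φ x δ| = |(φ x - M) - (cubeAvg φ x δ - M)| := by ring_nf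
      _ ≤ |φ x - M| + |cubeAvg φ x δ - M| := abs_sub _ _
      _ ≤ |φ x - M| + 3^n * ε' := by linarith
  have hint2φ : IntegrableOn φ (cube b (2*δ)) := hint3.mono_set hsub23
  have hintg2 : IntegrableOn (fun y => cubeAvg φ y δ) (cube b (2*δ)) :=
    IntegrableOn_cube (hg.locallyIntegrable) b h2δ.le
  have hintfg : IntegrableOn (fun y => |φ y - cubeAvg φ y δ|) (cube b (2*δ)) :=
    (hint2φ.sub hintg2).abs
  have hintfM : IntegrableOn (fun y => |φ y - M|) (cube b (2*δ)) :=
    (hint2φ.sub integrableOn_cube_const).abs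
  have step1 : ∫ y in cube b (2*δ), |φ y - cubeAvg φ y δ| ≤
      (∫ y in cube b (2*δ), |φ y - M|) + (2*δ)^n * (3^n * ε') := by
    calc ∫ y in cube b (2*δ), |φ y - cubeAvg φ y δ|
        ≤ ∫ y in cube b (2*δ), (|φ y - M| + 3^n * ε') :=
          setIntegral_mono_on hintfg (hintfM.add integrableOn_cube_const)
            (measurableSet_cube _ _) hpt
      _ = (∫ y in cube b (2*δ), |φ y - M|) + (2*δ)^n * (3^n * ε') := by
          rw [integral_add hintfM integrableOn_cube_const,
            setIntegral_const_cube b h2δ.le]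
  have step2 : (∫ y in cube b (2*δ), |φ y - M|) ≤ (3*δ)^n * ε' := by
    have hmono : (∫ y in cube b (2*δ), |φ y - M|) ≤ ∫ y in cube b (3*δ), |φ y - M| :=
      setIntegral_mono_set ((hint3.sub integrableOn_cube_const).abs)
        (Filter.Eventually.of_forall fun y => abs_nonneg _)
        (HasSubset.Subset.eventuallyLE hsub23)
    have heq : (∫ y in cube b (3*δ), |φ y - M|) = (3*δ)^n * cubeOsc φ b (3*δ) := by
      rw [cubeOsc]; field_simp; rfl
    calc (∫ y in cube b (2*δ), |φ y - M|) ≤ (3*δ)^n * cubeOsc φ b (3*δ) := by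
          rw [← heq]; exact hmono
      _ ≤ (3*δ)^n * ε' := by gcongr
  have hpow : ((3*δ):ℝ)^n = 3^n * δ^n := mul_pow 3 δ n
  have hpow2 : ((2*δ):ℝ)^n = 2^n * δ^n := mul_pow 2 δ n
  have h6 : (2:ℝ)^n * 3^n = 6^n := by rw [← mul_pow]; norm_num
  have h36 : (3:ℝ)^n ≤ 6^n := pow_le_pow_left₀ (by norm_num) (by norm_num) n
  have hδn : (0:ℝ) < δ^n := by positivity
  calc ∫ y in cube b (2*δ), |φ y - cubeAvg φ y δ|
      ≤ (∫ y in cube b (2*δ), |φ y - M|) + (2*δ)^n * (3^n * ε') := step1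
    _ ≤ (3*δ)^n * ε' + (2*δ)^n * (3^n * ε') := by linarith [step2]
    _ = 3^n * δ^n * ε' + 6^n * δ^n * ε' := by rw [hpow, hpow2, ← h6]; ring
    _ ≤ 2 * 6^n * ε' * δ^n := by
        nlinarith [mul_le_mul_of_nonneg_right (mul_le_mul_of_nonneg_right h36 hδn.le) hε'.le]

/-- Lemma E : bound on `∫_Q |φ - g|` over a large cube via a covering by `2δ`-cells. -/
lemma covering_bound (hφ : LocallyIntegrable φ) (hδ : 0 < δ) (hε' : 0 < ε')
    (hosc : ∀ c L, 0 < L → L ≤ 3*δ → cubeOsc φ c L ≤ ε')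
    (c : EuclideanSpace ℝ (Fin n)) {l : ℝ} (hl : δ ≤ l) :
    ∫ y in cube c l, |φ y - cubeAvg φ y δ| ≤ 2 * 12^n * ε' * l^n := by
  have hlpos : 0 < l := lt_of_lt_of_le hδ hl
  have hg : Continuous (fun y => cubeAvg φ y δ) := continuous_avgFn hφ hδ
  set K := ⌈l/δ⌉₊ with hKdef
  have hK1 : 1 ≤ K := Nat.one_le_ceil_iff.2 (by positivity)
  have hKR : (K:ℝ) ≤ 2*l/δ := by
    have h1 : (K:ℝ) ≤ l/δ + 1 := le_of_lt (Nat.ceil_lt_add_one (by positivity))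
    have h2 : (1:ℝ) ≤ l/δ := (one_le_div hδ).2 hl
    have : (K:ℝ) ≤ 2*(l/δ) := by linarith
    rw [mul_div_assoc]; exact this
  have hKδ : l ≤ δ * K := by
    have := Nat.le_ceil (l/δ)
    calc l = δ * (l/δ) := by field_simp
      _ ≤ δ * K := by gcongr
  set b : (Fin n → Fin K) → EuclideanSpace ℝ (Fin n) :=
    fun k => WithLp.toLp 2 (fun i => c i + δ * ((k i : ℕ) : ℝ)) with hbdef
  have hcover : cube c l ⊆ ⋃ (k : Fin n → Fin K), cube (b k) (2*δ) := by
    intro x hx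
    have hm : ∀ i : Fin n, (⌊(x i - c i)/δ⌋₊ - 1) < K := by
      intro i
      have ht1 : 0 < x i - c i := by linarith [(hx i).1]
      have ht : x i - c i < l := by linarith [(hx i).2]
      have : (x i - c i)/δ < K := by
        rw [div_lt_iff₀ hδ]
        calc x i - c i < l := ht
          _ ≤ δ * K := hKδ
          _ = K * δ := by ring
      have hfl : ⌊(x i - c i)/δ⌋₊ < K := (Nat.floor_lt (by positivity)).2 this
      omega
    refine mem_iUnion.2 ⟨fun i => ⟨⌊(x i - c i)/δ⌋₊ - 1, hm i⟩, ?_⟩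
    intro i
    have ht1 : 0 < x i - c i := by linarith [(hx i).1]
    have ht0 : 0 ≤ (x i - c i)/δ := by positivity
    set m := ⌊(x i - c i)/δ⌋₊ with hmdef
    have hfloor1 : (m:ℝ) ≤ (x i - c i)/δ := Nat.floor_le ht0
    have hfloor2 : (x i - c i)/δ < m + 1 := Nat.lt_floor_add_one _
    have hfloor1' : (m:ℝ) * δ ≤ x i - c i := (le_div_iff₀ hδ).1 hfloor1
    have hfloor2' : x i - c i < ((m:ℝ) + 1) * δ := (div_lt_iff₀ hδ).1 hfloor2
    rw [Set.mem_Ioo]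
    have hb : b (fun i => ⟨⌊(x i - c i)/δ⌋₊ - 1, hm i⟩) i = c i + δ * ((m - 1 : ℕ) : ℝ) := rfl
    rw [hb]
    rcases Nat.eq_zero_or_pos m with hm0 | hm1
    · rw [hm0]
      norm_num
      constructor
      · linarith
      · rw [hm0] at hfloor2'
        push_cast at hfloor2'
        linarith
    · have hcast : ((m - 1 : ℕ) : ℝ) = (m:ℝ) - 1 := by
        have : (1:ℕ) ≤ m := hm1
        push_cast [Nat.cast_sub this]
        ring
      rw [hcast]
      constructor
      · have : ((m:ℝ) - 1) * δ < (m:ℝ) * δ := by nlinarith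
        nlinarith
      · nlinarith
  -- integral estimate via lintegral
  set h : EuclideanSpace ℝ (Fin n) → ℝ := fun y => |φ y - cubeAvg φ y δ| with hhdef
  have hIQ : IntegrableOn h (cube c l) :=
    ((IntegrableOn_cube hφ c hlpos.le).sub (IntegrableOn_cube hg.locallyIntegrable c hlpos.le)).abs
  have hIcell : ∀ k : Fin n → Fin K, IntegrableOn h (cube (b k) (2*δ)) := fun k =>
    ((IntegrableOn_cube hφ _ (by linarith)).sub
      (IntegrableOn_cube hg.locallyIntegrable _ (by linarith))).abs
  have hnonneg : ∀ y, 0 ≤ h y := fun y => abs_nonneg _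
  set D : ℝ := 2 * 6^n * ε' * δ^n with hDdef
  have hD0 : 0 ≤ D := by positivity
  have hcellD : ∀ k : Fin n → Fin K, ∫ y in cube (b k) (2*δ), h y ≤ D :=
    fun k => cell_bound hφ hδ hε' hosc (b k)
  have key : ENNReal.ofReal (∫ y in cube c l, h y) ≤ ENNReal.ofReal ((K^n : ℕ) * D) := by
    rw [ofReal_integral_eq_lintegral_ofReal hIQ
      (Filter.Eventually.of_forall hnonneg)]
    calc ∫⁻ y in cube c l, ENNReal.ofReal (h y) ∂volume
        ≤ ∫⁻ y in ⋃ (k : Fin n → Fin K), cube (b k) (2*δ), ENNReal.ofReal (h y) ∂volume :=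
          lintegral_mono_set hcover
      _ ≤ ∑' (k : Fin n → Fin K), ∫⁻ y in cube (b k) (2*δ), ENNReal.ofReal (h y) ∂volume :=
          lintegral_iUnion_le _ _
      _ = ∑ (k : Fin n → Fin K), ∫⁻ y in cube (b k) (2*δ), ENNReal.ofReal (h y) ∂volume :=
          tsum_fintype _
      _ ≤ ∑ (_k : Fin n → Fin K), ENNReal.ofReal D := by
          apply Finset.sum_le_sum
          intro k _
          rw [← ofReal_integral_eq_lintegral_ofReal (hIcell k)
            (Filter.Eventually.of_forall hnonneg)]
          exact ENNReal.ofReal_le_ofReal (hcellD k)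
      _ = ((K^n : ℕ) : ℝ≥0∞) * ENNReal.ofReal D := by
          rw [Finset.sum_const, nsmul_eq_mul]
          congr 1
          rw [show Finset.univ.card = Fintype.card (Fin n → Fin K) from rfl, Fintype.card_fun]
          simp
      _ = ENNReal.ofReal ((K^n : ℕ) * D) := by
          have heq : ENNReal.ofReal ((K^n : ℕ) * D) = ((K^n:ℕ):ℝ≥0∞) * ENNReal.ofReal D := by
            rw [ENNReal.ofReal_mul (by positivity : (0:ℝ) ≤ ((K^n:ℕ):ℝ))]
            congr 1
            exact ENNReal.ofReal_natCast _
          exact heq.symm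
  have hQD : ∫ y in cube c l, h y ≤ (K^n : ℕ) * D := by
    exact (ENNReal.ofReal_le_ofReal_iff (by positivity)).1 key
  calc ∫ y in cube c l, h y ≤ (K^n : ℕ) * D := hQD
    _ ≤ (2*l/δ)^n * D := by
        push_cast
        gcongr
    _ = 2 * (2^n * 6^n) * ε' * l^n := by
        rw [hDdef, div_pow, mul_pow]
        have hδn : (0:ℝ) < δ^n := by positivity
        field_simp
    _ = 2 * 12^n * ε' * l^n := by
        rw [show (2:ℝ)^n * 6^n = 12^n by rw [← mul_pow]; norm_num]

lemma abs_coord_le_dist (x y : EuclideanSpace ℝ (Fin n)) (i : Fin n) :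
    |x i - y i| ≤ dist x y := by
  rw [EuclideanSpace.dist_eq]
  have h := Finset.single_le_sum (f := fun j => dist (x j) (y j)^2)
    (fun j _ => sq_nonneg _) (Finset.mem_univ i)
  have h2 : dist (x i) (y i)^2 = (x i - y i)^2 := by rw [Real.dist_eq, sq_abs]
  have h3 : (x i - y i)^2 ≤ ∑ j, dist (x j) (y j)^2 := by
    rw [← h2]; simpa using h
  calc |x i - y i| = Real.sqrt ((x i - y i)^2) := (Real.sqrt_sq_eq_abs _).symm
    _ ≤ Real.sqrt (∑ j, dist (x j) (y j)^2) := Real.sqrt_le_sqrt h3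

lemma volume_cube_diff_le {δ : ℝ} (hδ : 0 < δ) (x x' : EuclideanSpace ℝ (Fin n)) :
    volume (cube x δ \ cube x' δ) ≤
      (n : ℝ≥0∞) * ENNReal.ofReal (2 * dist x x') * (ENNReal.ofReal δ)^(n-1) := by
  set d := dist x x' with hd
  have hd0 : 0 ≤ d := dist_nonneg
  set T : Fin n → Set ℝ := fun i => (Ioc (x i) (x' i)) ∪ (Ico (x' i + δ) (x i + δ)) with hT
  set B : Fin n → Set (EuclideanSpace ℝ (Fin n)) := fun i =>
    (MeasurableEquiv.toLp 2 (Fin n → ℝ)).symm ⁻¹'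
      (univ.pi fun j => if j = i then T i else Ioo (x j) (x j + δ)) with hB
  have hsub : cube x δ \ cube x' δ ⊆ ⋃ i, B i := by
    rintro y ⟨hy1, hy2⟩
    simp only [cube, mem_setOf_eq, not_forall] at hy2
    obtain ⟨i, hi⟩ := hy2
    refine mem_iUnion.2 ⟨i, ?_⟩
    simp only [hB, mem_preimage, Set.mem_pi, mem_univ, forall_true_left]
    intro j
    by_cases hj : j = i
    · subst hj
      simp only [if_pos rfl]
      show (MeasurableEquiv.toLp 2 (Fin n → ℝ)).symm y j ∈ T j
      have hyj := hy1 j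
      rw [Set.mem_Ioo] at hi
      push_neg at hi
      rcases le_or_gt (y j) (x' j) with hc | hc
      · left
        exact ⟨hyj.1, hc⟩
      · right
        have := hi hc
        exact ⟨this, hyj.2⟩
    · simp only [if_neg hj]
      exact hy1 j
  have hvolB : ∀ i, volume (B i) ≤ ENNReal.ofReal (2*d) * (ENNReal.ofReal δ)^(n-1) := by
    intro i
    have hmeas : ∀ j, MeasurableSet (if j = i then T i else Ioo (x j) (x j + δ)) := by
      intro j
      by_cases hj : j = i <;> simp [hj]
      exact (measurableSet_Ioc.union measurableSet_Ico)
    rw [hB]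
    rw [(EuclideanSpace.volume_preserving_symm_measurableEquiv_toLp (Fin n)).measure_preimage
      ((MeasurableSet.univ_pi hmeas).nullMeasurableSet)]
    rw [volume_pi_pi]
    rw [← Finset.prod_erase_mul Finset.univ _ (Finset.mem_univ i)]
    have h1 : volume (if i = i then T i else Ioo (x i) (x i + δ)) ≤ ENNReal.ofReal (2*d) := by
      rw [if_pos rfl]
      calc volume (T i) ≤ volume (Ioc (x i) (x' i)) + volume (Ico (x' i + δ) (x i + δ)) :=
            measure_union_le _ _
        _ ≤ ENNReal.ofReal d + ENNReal.ofReal d := by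
            rw [Real.volume_Ioc, Real.volume_Ico]
            have e1 : x' i - x i ≤ d := by
              have := abs_coord_le_dist x' x i
              rw [dist_comm] at this
              calc x' i - x i ≤ |x' i - x i| := le_abs_self _
                _ ≤ d := this
            have e2 : x i + δ - (x' i + δ) ≤ d := by
              have := abs_coord_le_dist x x' i
              calc x i + δ - (x' i + δ) = x i - x' i := by ring
                _ ≤ |x i - x' i| := le_abs_self _
                _ ≤ d := this
            exact add_le_add (ENNReal.ofReal_le_ofReal e1) (ENNReal.ofReal_le_ofReal e2)
        _ = ENNReal.ofReal (2*d) := by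
            rw [← ENNReal.ofReal_add hd0 hd0]
            congr 1
            ring
    have h2 : ∏ j ∈ Finset.univ.erase i, volume (if j = i then T i else Ioo (x j) (x j + δ))
        = (ENNReal.ofReal δ)^(n-1) := by
      have : ∀ j ∈ Finset.univ.erase i, volume (if j = i then T i else Ioo (x j) (x j + δ))
          = ENNReal.ofReal δ := by
        intro j hj
        have hji : j ≠ i := Finset.ne_of_mem_erase hj
        rw [if_neg hji, Real.volume_Ioo]
        congr 1
        ring
      rw [Finset.prod_congr rfl this, Finset.prod_const,
        Finset.card_erase_of_mem (Finset.mem_univ i), Finset.card_univ, Fintype.card_fin]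
    calc (∏ j ∈ Finset.univ.erase i, volume (if j = i then T i else Ioo (x j) (x j + δ))) *
          volume (if i = i then T i else Ioo (x i) (x i + δ))
        ≤ (ENNReal.ofReal δ)^(n-1) * ENNReal.ofReal (2*d) := by
          rw [h2]
          exact mul_le_mul_right h1 _
      _ = ENNReal.ofReal (2*d) * (ENNReal.ofReal δ)^(n-1) := mul_comm _ _
  calc volume (cube x δ \ cube x' δ) ≤ volume (⋃ i, B i) := measure_mono hsub
    _ ≤ ∑' i : Fin n, volume (B i) := measure_iUnion_le _
    _ = ∑ i : Fin n, volume (B i) := tsum_fintype _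
    _ ≤ ∑ _i : Fin n, ENNReal.ofReal (2*d) * (ENNReal.ofReal δ)^(n-1) :=
        Finset.sum_le_sum (fun i _ => hvolB i)
    _ = (n : ℝ≥0∞) * ENNReal.ofReal (2*d) * (ENNReal.ofReal δ)^(n-1) := by
        rw [Finset.sum_const, nsmul_eq_mul, Finset.card_univ, Fintype.card_fin, mul_assoc]

lemma volume_cube_diff_toReal_le {δ : ℝ} (hδ : 0 < δ) (x x' : EuclideanSpace ℝ (Fin n)) :
    (volume (cube x δ \ cube x' δ)).toReal ≤ (n:ℝ) * (2 * dist x x') * δ^(n-1) := by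
  apply ENNReal.toReal_le_of_le_ofReal (by positivity)
  calc volume (cube x δ \ cube x' δ)
      ≤ (n : ℝ≥0∞) * ENNReal.ofReal (2 * dist x x') * (ENNReal.ofReal δ)^(n-1) :=
        volume_cube_diff_le hδ x x'
    _ = ENNReal.ofReal ((n:ℝ) * (2 * dist x x') * δ^(n-1)) := by
        have heq : ENNReal.ofReal ((n:ℝ) * (2 * dist x x') * δ^(n-1))
            = (n : ℝ≥0∞) * ENNReal.ofReal (2 * dist x x') * (ENNReal.ofReal δ)^(n-1) := by
          rw [ENNReal.ofReal_mul (by positivity), ENNReal.ofReal_mul (by positivity),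
            ENNReal.ofReal_natCast, ENNReal.ofReal_pow hδ.le]
        exact heq.symm

section Core2
variable {φ : EuclideanSpace ℝ (Fin n) → ℝ} {δ ε' : ℝ}

/-- Local Lipschitz estimate for `ψ = A (A φ)`. -/
lemma psi_local_lip (hφ : LocallyIntegrable φ) (hδ : 0 < δ) (hε' : 0 < ε')
    (hosc : ∀ c L, 0 < L → L ≤ 3*δ → cubeOsc φ c L ≤ ε')
    {x x' : EuclideanSpace ℝ (Fin n)} (hdist : ∀ i, |x i - x' i| ≤ δ) :
    |cubeAvg (fun y => cubeAvg φ y δ) x δ - cubeAvg (fun y => cubeAvg φ y δ) x' δ| ≤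
      ((4 * 2^n * ε') * (2 * (n:ℝ) * 2 * δ^(n-1)) / δ^n) * dist x x' := by
  set g : EuclideanSpace ℝ (Fin n) → ℝ := fun y => cubeAvg φ y δ with hg
  have hgc : Continuous g := continuous_avgFn hφ hδ
  set m := g x with hm
  set h : EuclideanSpace ℝ (Fin n) → ℝ := fun y => g y - m with hh
  have hhc : Continuous h := hgc.sub continuous_const
  have hδn : (0:ℝ) < δ^n := by positivity
  have hIx : IntegrableOn h (cube x δ) := IntegrableOn_cube hhc.locallyIntegrable x hδ.le
  have hIx' : IntegrableOn h (cube x' δ) := IntegrableOn_cube hhc.locallyIntegrable x' hδ.le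
  have hgx : IntegrableOn g (cube x δ) := IntegrableOn_cube hgc.locallyIntegrable x hδ.le
  have hgx' : IntegrableOn g (cube x' δ) := IntegrableOn_cube hgc.locallyIntegrable x' hδ.le
  -- ∫ h over each cube
  have key1 : ∫ y in cube x δ, h y = (∫ y in cube x δ, g y) - δ^n * m := by
    rw [hh]
    simp only []
    rw [integral_sub hgx integrableOn_cube_const, setIntegral_const_cube x hδ.le]
  have key2 : ∫ y in cube x' δ, h y = (∫ y in cube x' δ, g y) - δ^n * m := by
    rw [hh]
    simp only []
    rw [integral_sub hgx' integrableOn_cube_const, setIntegral_const_cube x' hδ.le]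
  -- splitting into intersection and differences
  have split1 : (∫ y in cube x δ ∩ cube x' δ, h y) + (∫ y in cube x δ \ cube x' δ, h y)
      = ∫ y in cube x δ, h y := integral_inter_add_diff (measurableSet_cube x' δ) hIx
  have split2 : (∫ y in cube x' δ ∩ cube x δ, h y) + (∫ y in cube x' δ \ cube x δ, h y)
      = ∫ y in cube x' δ, h y := integral_inter_add_diff (measurableSet_cube x δ) hIx'
  have hcomm : cube x' δ ∩ cube x δ = cube x δ ∩ cube x' δ := Set.inter_comm _ _
  rw [hcomm] at split2
  -- bounds on the difference pieces
  have hbound1 : ∀ y ∈ cube x δ \ cube x' δ, ‖h y‖ ≤ 2 * 2^n * ε' := by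
    rintro y ⟨hy, -⟩
    rw [Real.norm_eq_abs]
    apply avgFn_osc hφ hδ hε' hosc
    intro i
    obtain ⟨h1, h2⟩ := hy i
    rw [abs_le]; constructor <;> linarith
  have hbound2 : ∀ y ∈ cube x' δ \ cube x δ, ‖h y‖ ≤ 4 * 2^n * ε' := by
    rintro y ⟨hy, -⟩
    rw [Real.norm_eq_abs]
    apply avgFn_osc2 hφ hδ hε' hosc
    intro i
    obtain ⟨h1, h2⟩ := hy i
    have := hdist i
    rw [abs_le] at this ⊢
    constructor <;> [linarith [this.1]; linarith [this.2]]
  have hfin1 : volume (cube x δ \ cube x' δ) < ⊤ :=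
    lt_of_le_of_lt (measure_mono diff_subset) (volume_cube_lt_top x δ)
  have hfin2 : volume (cube x' δ \ cube x δ) < ⊤ :=
    lt_of_le_of_lt (measure_mono diff_subset) (volume_cube_lt_top x' δ)
  have hmeas1 : AEStronglyMeasurable h (volume.restrict (cube x δ \ cube x' δ)) :=
    hhc.aestronglyMeasurable.restrict
  have hmeas2 : AEStronglyMeasurable h (volume.restrict (cube x' δ \ cube x δ)) :=
    hhc.aestronglyMeasurable.restrict
  have E1 : ‖∫ y in cube x δ \ cube x' δ, h y‖ ≤
      (2 * 2^n * ε') * (volume (cube x δ \ cube x' δ)).toReal :=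
    by simpa only [measureReal_def] using norm_setIntegral_le_of_norm_le_const hfin1 hbound1
  have E2 : ‖∫ y in cube x' δ \ cube x δ, h y‖ ≤
      (4 * 2^n * ε') * (volume (cube x' δ \ cube x δ)).toReal :=
    by simpa only [measureReal_def] using norm_setIntegral_le_of_norm_le_const hfin2 hbound2
  have V1 : (volume (cube x δ \ cube x' δ)).toReal ≤ (n:ℝ) * (2 * dist x x') * δ^(n-1) :=
    volume_cube_diff_toReal_le hδ x x'
  have V2 : (volume (cube x' δ \ cube x δ)).toReal ≤ (n:ℝ) * (2 * dist x x') * δ^(n-1) := by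
    have := volume_cube_diff_toReal_le hδ x' x
    rw [dist_comm x' x] at this
    exact this
  -- assemble
  have hnum : (∫ y in cube x δ, g y) - (∫ y in cube x' δ, g y)
      = (∫ y in cube x δ \ cube x' δ, h y) - ∫ y in cube x' δ \ cube x δ, h y := by
    have e1 : (∫ y in cube x δ, g y) - (∫ y in cube x' δ, g y)
        = (∫ y in cube x δ, h y) - ∫ y in cube x' δ, h y := by
      rw [key1, key2]; ring
    rw [e1, ← split1, ← split2]; ring
  set W : ℝ := (n:ℝ) * (2 * dist x x') * δ^(n-1) with hW
  have hW0 : 0 ≤ W := by positivity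
  have habs : |(∫ y in cube x δ, g y) - (∫ y in cube x' δ, g y)| ≤
      (4 * 2^n * ε') * (2 * W) := by
    rw [hnum]
    have t1 : |∫ y in cube x δ \ cube x' δ, h y| ≤ (2 * 2^n * ε') * W := by
      rw [← Real.norm_eq_abs]
      exact E1.trans (mul_le_mul_of_nonneg_left V1 (by positivity))
    have t2 : |∫ y in cube x' δ \ cube x δ, h y| ≤ (4 * 2^n * ε') * W := by
      rw [← Real.norm_eq_abs]
      exact E2.trans (mul_le_mul_of_nonneg_left V2 (by positivity))
    have t1' : |∫ y in cube x δ \ cube x' δ, h y| ≤ (4 * 2^n * ε') * W := by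
      refine t1.trans (mul_le_mul_of_nonneg_right ?_ hW0)
      have : (0:ℝ) < 2^n := by positivity
      nlinarith
    calc |(∫ y in cube x δ \ cube x' δ, h y) - ∫ y in cube x' δ \ cube x δ, h y|
        ≤ |∫ y in cube x δ \ cube x' δ, h y| + |∫ y in cube x' δ \ cube x δ, h y| :=
          abs_sub _ _
      _ ≤ (4 * 2^n * ε') * W + (4 * 2^n * ε') * W := add_le_add t1' t2
      _ = (4 * 2^n * ε') * (2 * W) := by ring
  have hpsi : cubeAvg g x δ - cubeAvg g x' δ
      = ((∫ y in cube x δ, g y) - (∫ y in cube x' δ, g y)) / δ^n := by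
    rw [cubeAvg, cubeAvg, div_sub_div_same]
  show |cubeAvg g x δ - cubeAvg g x' δ| ≤ _
  rw [hpsi, abs_div, abs_of_pos hδn, div_le_iff₀ hδn]
  calc |(∫ y in cube x δ, g y) - (∫ y in cube x' δ, g y)|
      ≤ (4 * 2^n * ε') * (2 * W) := habs
    _ = ((4 * 2^n * ε') * (2 * (n:ℝ) * 2 * δ^(n-1)) / δ^n) * dist x x' * δ^n := by
        rw [hW]
        field_simp

/-- Uniform continuity of `ψ = A (A φ)`. -/
lemma psi_uc (hφ : LocallyIntegrable φ) (hδ : 0 < δ) (hε' : 0 < ε')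
    (hosc : ∀ c L, 0 < L → L ≤ 3*δ → cubeOsc φ c L ≤ ε') :
    UniformContinuous (fun x => cubeAvg (fun y => cubeAvg φ y δ) x δ) := by
  rw [Metric.uniformContinuous_iff]
  intro ε₀ hε₀
  set C : ℝ := (4 * 2^n * ε') * (2 * (n:ℝ) * 2 * δ^(n-1)) / δ^n with hC
  have hC0 : 0 ≤ C := by positivity
  have hC1 : (0:ℝ) < C + 1 := by linarith
  refine ⟨min δ (ε₀/(C+1)), lt_min hδ (div_pos hε₀ hC1), ?_⟩
  intro a b hab
  have hd1 : dist a b < δ := lt_of_lt_of_le hab (min_le_left _ _)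
  have hd2 : dist a b < ε₀/(C+1) := lt_of_lt_of_le hab (min_le_right _ _)
  have hcoord : ∀ i, |a i - b i| ≤ δ := fun i => (abs_coord_le_dist a b i).trans hd1.le
  have hlip := psi_local_lip hφ hδ hε' hosc hcoord
  rw [← hC] at hlip
  rw [Real.dist_eq]
  have hq : (C+1) * (ε₀/(C+1)) = ε₀ := by field_simp
  calc |cubeAvg (fun y => cubeAvg φ y δ) a δ - cubeAvg (fun y => cubeAvg φ y δ) b δ|
      ≤ C * dist a b := hlip
    _ ≤ C * (ε₀/(C+1)) := mul_le_mul_of_nonneg_left hd2.le hC0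
    _ < ε₀ := by nlinarith [div_pos hε₀ hC1]

/-- Small-scale oscillation bound for `ψ`. -/
lemma psi_small_osc (hφ : LocallyIntegrable φ) (hδ : 0 < δ) (hε' : 0 < ε')
    (hosc : ∀ c L, 0 < L → L ≤ 3*δ → cubeOsc φ c L ≤ ε')
    {c : EuclideanSpace ℝ (Fin n)} {l : ℝ} (hl : 0 < l) (hlδ : l ≤ δ) :
    cubeOsc (fun x => cubeAvg (fun y => cubeAvg φ y δ) x δ) c l ≤ 6 * 2^n * ε' := by
  have hgc : Continuous (fun y => cubeAvg φ y δ) := continuous_avgFn hφ hδ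
  have hψc : Continuous (fun x => cubeAvg (fun y => cubeAvg φ y δ) x δ) :=
    continuous_avgFn hgc.locallyIntegrable hδ
  apply cubeOsc_le_of_pairwise (IntegrableOn_cube hψc.locallyIntegrable c hl.le) hl
  intro x hx y hy
  have h1 := avgFn_self_close hφ hδ hε' hosc x
  have h2 := avgFn_self_close hφ hδ hε' hosc y
  have h3 : |cubeAvg φ x δ - cubeAvg φ y δ| ≤ 2*2^n*ε' := by
    apply avgFn_osc hφ hδ hε' hosc
    intro i
    obtain ⟨ha1, ha2⟩ := hx i
    obtain ⟨hb1, hb2⟩ := hy i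
    rw [abs_le]
    constructor <;> nlinarith
  set g : EuclideanSpace ℝ (Fin n) → ℝ := fun y => cubeAvg φ y δ with hgdef
  set ψ : EuclideanSpace ℝ (Fin n) → ℝ := fun x => cubeAvg g x δ with hψdef
  calc |ψ x - ψ y| = |(ψ x - g x) + (g x - g y) + (g y - ψ y)| := by ring_nf
    _ ≤ |ψ x - g x| + |g x - g y| + |g y - ψ y| := abs_add_three _ _ _
    _ ≤ 2*2^n*ε' + 2*2^n*ε' + 2*2^n*ε' := by
        have h1' : |ψ x - g x| ≤ 2*2^n*ε' := by rw [abs_sub_comm]; exact h1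
        exact add_le_add (add_le_add h1' h3) h2
    _ = 6 * 2^n * ε' := by ring

/-- The master bound : `cubeOsc (φ - ψ)` is uniformly small over ALL cubes. -/
lemma forward_osc_bound (hφ : LocallyIntegrable φ) (hδ : 0 < δ) (hε' : 0 < ε')
    (hosc : ∀ c L, 0 < L → L ≤ 3*δ → cubeOsc φ c L ≤ ε')
    (c : EuclideanSpace ℝ (Fin n)) {l : ℝ} (hl : 0 < l) :
    cubeOsc (fun x => φ x - cubeAvg (fun y => cubeAvg φ y δ) x δ) c l
      ≤ (4*12^n + 4*2^n + 6*2^n + 1) * ε' := by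
  have hgc : Continuous (fun y => cubeAvg φ y δ) := continuous_avgFn hφ hδ
  have hψc : Continuous (fun x => cubeAvg (fun y => cubeAvg φ y δ) x δ) :=
    continuous_avgFn hgc.locallyIntegrable hδ
  have hφint : IntegrableOn φ (cube c l) := IntegrableOn_cube hφ c hl.le
  have hψint : IntegrableOn (fun x => cubeAvg (fun y => cubeAvg φ y δ) x δ) (cube c l) :=
    IntegrableOn_cube hψc.locallyIntegrable c hl.le
  have hgint : IntegrableOn (fun y => cubeAvg φ y δ) (cube c l) :=
    IntegrableOn_cube hgc.locallyIntegrable c hl.le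
  have hsubint : IntegrableOn (fun x => φ x - cubeAvg (fun y => cubeAvg φ y δ) x δ) (cube c l) :=
    hφint.sub hψint
  have hpow2 : (0:ℝ) < 2^n := by positivity
  have hpow12 : (0:ℝ) < 12^n := by positivity
  rcases le_or_gt δ l with hcase | hcase
  · -- large cubes : covering estimate
    have h2avg := cubeOsc_le_two_avg hsubint hl (0:ℝ)
    simp only [sub_zero] at h2avg
    have hptwise : ∀ x ∈ cube c l, |φ x - cubeAvg (fun y => cubeAvg φ y δ) x δ| ≤
        |φ x - cubeAvg φ x δ| + 2*2^n*ε' := by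
      intro x _
      have hcl := avgFn_self_close hφ hδ hε' hosc x
      calc |φ x - cubeAvg (fun y => cubeAvg φ y δ) x δ|
          = |(φ x - cubeAvg φ x δ) + (cubeAvg φ x δ - cubeAvg (fun y => cubeAvg φ y δ) x δ)| := by
            ring_nf
        _ ≤ |φ x - cubeAvg φ x δ| + |cubeAvg φ x δ - cubeAvg (fun y => cubeAvg φ y δ) x δ| :=
            abs_add_le _ _
        _ ≤ |φ x - cubeAvg φ x δ| + 2*2^n*ε' := by linarith
    have hint1 : IntegrableOn (fun x => |φ x - cubeAvg φ x δ|) (cube c l) :=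
      (hφint.sub hgint).abs
    have hIQ : ∫ x in cube c l, |φ x - cubeAvg (fun y => cubeAvg φ y δ) x δ| ≤
        2*12^n*ε'*l^n + l^n * (2*2^n*ε') := by
      calc ∫ x in cube c l, |φ x - cubeAvg (fun y => cubeAvg φ y δ) x δ|
          ≤ ∫ x in cube c l, (|φ x - cubeAvg φ x δ| + 2*2^n*ε') :=
            setIntegral_mono_on hsubint.abs (hint1.add integrableOn_cube_const)
              (measurableSet_cube c l) hptwise
        _ = (∫ x in cube c l, |φ x - cubeAvg φ x δ|) + l^n * (2*2^n*ε') := by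
            rw [integral_add hint1 integrableOn_cube_const, setIntegral_const_cube c hl.le]
        _ ≤ 2*12^n*ε'*l^n + l^n * (2*2^n*ε') := by
            have := covering_bound hφ hδ hε' hosc c hcase
            linarith
    have hln : (0:ℝ) < l^n := by positivity
    calc cubeOsc (fun x => φ x - cubeAvg (fun y => cubeAvg φ y δ) x δ) c l
        ≤ 2 * ((∫ x in cube c l, |φ x - cubeAvg (fun y => cubeAvg φ y δ) x δ|) / l^n) := h2avg
      _ ≤ 2 * ((2*12^n*ε'*l^n + l^n * (2*2^n*ε')) / l^n) := by gcongr
      _ = 4*12^n*ε' + 4*2^n*ε' := by field_simp; ring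
      _ ≤ (4*12^n + 4*2^n + 6*2^n + 1) * ε' := by nlinarith
  · -- small cubes : split φ - ψ = φ + (-ψ)
    have heq : (fun x => φ x - cubeAvg (fun y => cubeAvg φ y δ) x δ)
        = (fun x => φ x + (-(cubeAvg (fun y => cubeAvg φ y δ) x δ))) := by
      funext x; ring
    rw [heq]
    have hnegint : IntegrableOn (fun x => -(cubeAvg (fun y => cubeAvg φ y δ) x δ)) (cube c l) :=
      hψint.neg
    have hadd := cubeOsc_add_le hφint hnegint hl
    have hneg : cubeOsc (fun x => -(cubeAvg (fun y => cubeAvg φ y δ) x δ)) c l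
        = cubeOsc (fun x => cubeAvg (fun y => cubeAvg φ y δ) x δ) c l :=
      cubeOsc_neg (f := fun x => cubeAvg (fun y => cubeAvg φ y δ) x δ)
    have hφosc : cubeOsc φ c l ≤ ε' := hosc c l hl (by linarith)
    have hψosc := psi_small_osc hφ hδ hε' hosc (c := c) hl hcase.le
    calc cubeOsc (fun x => φ x + (-(cubeAvg (fun y => cubeAvg φ y δ) x δ))) c l
        ≤ cubeOsc φ c l + cubeOsc (fun x => -(cubeAvg (fun y => cubeAvg φ y δ) x δ)) c l := hadd
      _ ≤ ε' + 6*2^n*ε' := by rw [hneg]; exact add_le_add hφosc hψosc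
      _ ≤ (4*12^n + 4*2^n + 6*2^n + 1) * ε' := by nlinarith

end Core2

end Core

lemma dist_le_of_mem_cube {c : EuclideanSpace ℝ (Fin n)} {l : ℝ}
    {x y : EuclideanSpace ℝ (Fin n)} (hx : x ∈ cube c l) (hy : y ∈ cube c l) :
    dist x y ≤ Real.sqrt (n * l^2) := by
  rw [EuclideanSpace.dist_eq]
  apply Real.sqrt_le_sqrt
  calc ∑ i, dist (x i) (y i) ^ 2 ≤ ∑ _i : Fin n, l ^ 2 := by
        apply Finset.sum_le_sum
        intro i _
        obtain ⟨ha1, ha2⟩ := hx i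
        obtain ⟨hb1, hb2⟩ := hy i
        have habs : |x i - y i| ≤ l := by rw [abs_le]; constructor <;> nlinarith
        calc dist (x i) (y i) ^ 2 = |x i - y i| ^ 2 := by rw [Real.dist_eq]
          _ ≤ l ^ 2 := by nlinarith [abs_nonneg (x i - y i)]
    _ = n * l ^ 2 := by simp [Finset.sum_const, mul_comm]

end Lemmas


/-- For `φ ∈ BMO(ℝⁿ)`: `φ ∈ VMO(ℝⁿ)` iff `φ` lies in the `BMO`-closure of
`UC(ℝⁿ) ∩ BMO(ℝⁿ)`. -/
theorem vmo_iff_closure_uc {n : ℕ} (φ : EuclideanSpace ℝ (Fin n) → ℝ) (hφ : IsBMO φ) :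
    IsVMO φ ↔
      ∀ ε > (0 : ℝ), ∃ ψ : EuclideanSpace ℝ (Fin n) → ℝ,
        UniformContinuous ψ ∧ IsBMO ψ ∧ bmoNorm (fun x => φ x - ψ x) ≤ ε := by
  constructor
  · rintro ⟨-, hvmo⟩ ε hε
    set Cn : ℝ := 4*12^n + 4*2^n + 6*2^n + 1 with hCn
    have hCn0 : (0:ℝ) < Cn := by positivity
    set ε' : ℝ := ε / Cn with hε'def
    have hε' : 0 < ε' := div_pos hε hCn0
    obtain ⟨δ₀, hδ₀, hosc₀⟩ := hvmo ε' hε'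
    set δ : ℝ := δ₀/3 with hδdef
    have hδ : 0 < δ := div_pos hδ₀ (by norm_num)
    have hosc : ∀ c L, 0 < L → L ≤ 3*δ → cubeOsc φ c L ≤ ε' := by
      intro c L hL hL3
      refine hosc₀ c L hL ?_
      rw [hδdef] at hL3
      linarith
    have hφl := hφ.1
    refine ⟨fun x => cubeAvg (fun y => cubeAvg φ y δ) x δ, psi_uc hφl hδ hε' hosc, ?_, ?_⟩
    · -- IsBMO ψ
      have hgc : Continuous (fun y => cubeAvg φ y δ) := continuous_avgFn hφl hδ
      have hψc : Continuous (fun x => cubeAvg (fun y => cubeAvg φ y δ) x δ) :=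
        continuous_avgFn hgc.locallyIntegrable hδ
      refine ⟨hψc.locallyIntegrable, ?_⟩
      obtain ⟨Cφ, hCφ⟩ := hφ.2
      refine ⟨Cφ + Cn * ε', ?_⟩
      intro c l hl
      have hφint : IntegrableOn φ (cube c l) := IntegrableOn_cube hφl c hl.le
      have hψint : IntegrableOn (fun x => cubeAvg (fun y => cubeAvg φ y δ) x δ) (cube c l) :=
        IntegrableOn_cube hψc.locallyIntegrable c hl.le
      have heq : (fun x => cubeAvg (fun y => cubeAvg φ y δ) x δ)
          = (fun x => φ x + (cubeAvg (fun y => cubeAvg φ y δ) x δ - φ x)) := by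
        funext x; ring
      have hsint : IntegrableOn
          (fun x => cubeAvg (fun y => cubeAvg φ y δ) x δ - φ x) (cube c l) :=
        hψint.sub hφint
      have hneg : cubeOsc (fun x => cubeAvg (fun y => cubeAvg φ y δ) x δ - φ x) c l
          = cubeOsc (fun x => φ x - cubeAvg (fun y => cubeAvg φ y δ) x δ) c l := by
        have heq2 : (fun x => cubeAvg (fun y => cubeAvg φ y δ) x δ - φ x)
            = (fun x => -((fun z => φ z - cubeAvg (fun y => cubeAvg φ y δ) z δ) x)) := by
          funext x
          show cubeAvg (fun y => cubeAvg φ y δ) x δ - φ x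
            = -(φ x - cubeAvg (fun y => cubeAvg φ y δ) x δ)
          ring
        rw [heq2]
        exact cubeOsc_neg (f := fun z => φ z - cubeAvg (fun y => cubeAvg φ y δ) z δ)
      rw [heq]
      calc cubeOsc (fun x => φ x + (cubeAvg (fun y => cubeAvg φ y δ) x δ - φ x)) c l
          ≤ cubeOsc φ c l
              + cubeOsc (fun x => cubeAvg (fun y => cubeAvg φ y δ) x δ - φ x) c l :=
            cubeOsc_add_le hφint hsint hl
        _ ≤ Cφ + Cn * ε' := by
            apply add_le_add (hCφ c l hl)
            rw [hneg]
            exact forward_osc_bound hφl hδ hε' hosc c hl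
    · -- bmoNorm bound
      apply csInf_le ⟨0, fun y hy => hy.1⟩
      refine ⟨hε.le, ?_⟩
      intro c l hl
      calc cubeOsc (fun x => φ x - cubeAvg (fun y => cubeAvg φ y δ) x δ) c l
          ≤ Cn * ε' := forward_osc_bound hφl hδ hε' hosc c hl
        _ = ε := by
            rw [hε'def]
            field_simp
  · intro h
    refine ⟨hφ, ?_⟩
    intro ε hε
    obtain ⟨ψ, hUC, hψBMO, hnorm⟩ := h (ε/4) (by positivity)
    obtain ⟨δ₁, hδ₁, hUC'⟩ := Metric.uniformContinuous_iff.1 hUC (ε/4) (by positivity)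
    refine ⟨δ₁/((n:ℝ)+1), by positivity, ?_⟩
    intro c l hl hlδ
    obtain ⟨Cφ, hCφ⟩ := hφ.2
    obtain ⟨Cψ, hCψ⟩ := hψBMO.2
    have hφl := hφ.1
    have hψl := hψBMO.1
    have hφint : IntegrableOn φ (cube c l) := IntegrableOn_cube hφl c hl.le
    have hψint : IntegrableOn ψ (cube c l) := IntegrableOn_cube hψl c hl.le
    have hSne : Set.Nonempty
        {C : ℝ | 0 ≤ C ∧ ∀ c l, 0 < l → cubeOsc (fun x => φ x - ψ x) c l ≤ C} := by
      refine ⟨max (Cφ + Cψ) 0, le_max_right _ _, ?_⟩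
      intro c' l' hl'
      have h1 : IntegrableOn φ (cube c' l') := IntegrableOn_cube hφl c' hl'.le
      have h2 : IntegrableOn ψ (cube c' l') := IntegrableOn_cube hψl c' hl'.le
      have h2' : IntegrableOn (fun x => -ψ x) (cube c' l') := h2.neg
      have heq : (fun x => φ x - ψ x) = (fun x => φ x + (-ψ x)) := by funext x; ring
      rw [heq]
      calc cubeOsc (fun x => φ x + (-ψ x)) c' l'
          ≤ cubeOsc φ c' l' + cubeOsc (fun x => -ψ x) c' l' := cubeOsc_add_le h1 h2' hl'
        _ = cubeOsc φ c' l' + cubeOsc ψ c' l' := by rw [cubeOsc_neg]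
        _ ≤ Cφ + Cψ := add_le_add (hCφ c' l' hl') (hCψ c' l' hl')
        _ ≤ max (Cφ + Cψ) 0 := le_max_left _ _
    have hkey : cubeOsc (fun x => φ x - ψ x) c l ≤ bmoNorm (fun x => φ x - ψ x) :=
      le_csInf hSne (fun b hb => hb.2 c l hl)
    have hψosc : cubeOsc ψ c l ≤ ε/4 := by
      apply cubeOsc_le_of_pairwise hψint hl
      intro x hx y hy
      have hdxy : dist x y < δ₁ := by
        have h1 : dist x y ≤ Real.sqrt (n * l^2) := dist_le_of_mem_cube hx hy
        have h2 : Real.sqrt (n * l^2) < δ₁ := by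
          rw [Real.sqrt_lt' hδ₁]
          have hn1 : (0:ℝ) < (n:ℝ)+1 := by positivity
          have hl2 : l^2 ≤ (δ₁/((n:ℝ)+1))^2 := by nlinarith
          have hfin : (n:ℝ) * (δ₁/((n:ℝ)+1))^2 < δ₁^2 := by
            have h3 : (n:ℝ) < ((n:ℝ)+1)^2 := by nlinarith [sq_nonneg (n:ℝ)]
            have hδsq : (0:ℝ) < δ₁^2 := by positivity
            have hre : (n:ℝ) * ((δ₁/((n:ℝ)+1))^2) = ((n:ℝ) * δ₁^2)/(((n:ℝ)+1)^2) := by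
              rw [div_pow]; ring
            rw [hre, div_lt_iff₀ (by positivity : (0:ℝ) < ((n:ℝ)+1)^2)]
            nlinarith
          calc (n:ℝ) * l^2 ≤ (n:ℝ) * (δ₁/((n:ℝ)+1))^2 :=
                mul_le_mul_of_nonneg_left hl2 (Nat.cast_nonneg n)
            _ < δ₁^2 := hfin
        linarith
      have := hUC' hdxy
      rw [Real.dist_eq] at this
      exact this.le
    have h1 : IntegrableOn (fun x => φ x - ψ x) (cube c l) := hφint.sub hψint
    have heq2 : φ = (fun x => (φ x - ψ x) + ψ x) := by funext x; ring
    calc cubeOsc φ c l = cubeOsc (fun x => (φ x - ψ x) + ψ x) c l := by rw [← heq2]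
      _ ≤ cubeOsc (fun x => φ x - ψ x) c l + cubeOsc ψ c l := cubeOsc_add_le h1 hψint hl
      _ ≤ ε/4 + ε/4 := add_le_add (hkey.trans hnorm) hψosc
      _ ≤ ε := by linarith
end

section
/- Let φ ∈ BMO(ℝ^n) with modulus M_δ(φ) = sup_{ℓ(Q)≤δ}(1/|Q|)∫_Q|φ - φ_Q|. Then for any y with |y| < δ, ‖φ_y - φ‖_* ≤ C(n) M_{2δ}(φ), where φ_y(x) = φ(x-y) and C(n) depends only on n. In particular, if φ ∈ VMO(ℝ^n), translations act continuously on φ in BMO norm. -/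
open MeasureTheory Real Set Filter

open scoped ENNReal

namespace TBB

variable {n : ℕ}

lemma meas_coord (i : Fin n) : Measurable fun x : EuclideanSpace ℝ (Fin n) => x i :=
  (measurable_pi_apply i).comp (MeasurableEquiv.toLp 2 (Fin n → ℝ)).symm.measurable

lemma measurableSet_cube (c : EuclideanSpace ℝ (Fin n)) (l : ℝ) : MeasurableSet (cube c l) := by
  have : cube c l = ⋂ i, (fun x : EuclideanSpace ℝ (Fin n) => x i) ⁻¹' Set.Ioo (c i) (c i + l) := by
    ext x; simp [cube]
  rw [this]
  exact MeasurableSet.iInter fun i => measurableSet_Ioo.preimage (meas_coord i)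

lemma volume_cube (c : EuclideanSpace ℝ (Fin n)) {l : ℝ} (hl : 0 ≤ l) :
    volume (cube c l) = ENNReal.ofReal (l ^ n) := by
  have h : cube c l = (MeasurableEquiv.toLp 2 (Fin n → ℝ)).symm ⁻¹'
      (Set.pi Set.univ fun i => Set.Ioo (c i) (c i + l)) := by
    ext x; simp [cube, Set.mem_pi]
  rw [h, (EuclideanSpace.volume_preserving_symm_measurableEquiv_toLp (Fin n)).measure_preimage
    (MeasurableSet.pi Set.countable_univ fun i _ => measurableSet_Ioo).nullMeasurableSet,
    volume_pi_pi]
  simp [Real.volume_Ioo, ENNReal.ofReal_pow hl]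

lemma abs_coord_le (y : EuclideanSpace ℝ (Fin n)) (i : Fin n) : |y i| ≤ ‖y‖ := by
  rw [EuclideanSpace.norm_eq y]
  have h1 : |y i| = Real.sqrt (‖y i‖ ^ 2) := by
    rw [Real.sqrt_sq_eq_abs, Real.norm_eq_abs, abs_abs]
  rw [h1]
  exact Real.sqrt_le_sqrt
    (Finset.single_le_sum (f := fun j => ‖y j‖ ^ 2) (fun j _ => sq_nonneg _) (Finset.mem_univ i))

lemma cube_subset_closedBall (c : EuclideanSpace ℝ (Fin n)) (l : ℝ) :
    cube c l ⊆ Metric.closedBall c (Real.sqrt (n * l ^ 2)) := by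
  intro x hx
  rw [Metric.mem_closedBall, dist_eq_norm, EuclideanSpace.norm_eq]
  apply Real.sqrt_le_sqrt
  have : ∀ i, ‖(x - c) i‖ ^ 2 ≤ l ^ 2 := by
    intro i
    have hi := hx i
    simp only [Set.mem_Ioo] at hi
    have : (x - c) i = x i - c i := by simp
    rw [this, Real.norm_eq_abs, sq_abs]
    nlinarith [hi.1, hi.2]
  calc ∑ i, ‖(x - c) i‖ ^ 2 ≤ ∑ _i : Fin n, l ^ 2 := Finset.sum_le_sum fun i _ => this i
    _ = n * l ^ 2 := by simp [Finset.sum_const, mul_comm]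

lemma integrableOn_cube {f : EuclideanSpace ℝ (Fin n) → ℝ} (hf : LocallyIntegrable f)
    (c : EuclideanSpace ℝ (Fin n)) (l : ℝ) : IntegrableOn f (cube c l) :=
  (hf.integrableOn_isCompact (isCompact_closedBall c (Real.sqrt (n * l ^ 2)))).mono_set
    (cube_subset_closedBall c l)

lemma cube_preimage (c y : EuclideanSpace ℝ (Fin n)) (l : ℝ) :
    (fun x => x - y) ⁻¹' cube (c - y) l = cube c l := by
  ext x
  simp only [cube, Set.mem_preimage, Set.mem_setOf_eq, Set.mem_Ioo]
  constructor <;> intro h i <;> have hi := h i <;>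
    simp only [PiLp.sub_apply] at * <;> constructor <;> linarith [hi.1, hi.2]

lemma integral_cube_sub (f : EuclideanSpace ℝ (Fin n) → ℝ) (y c : EuclideanSpace ℝ (Fin n)) (l : ℝ) :
    ∫ x in cube c l, f (x - y) = ∫ x in cube (c - y) l, f x := by
  rw [← cube_preimage c y l]
  exact (measurePreserving_sub_right volume y).setIntegral_preimage_emb
    (MeasurableEquiv.subRight y).measurableEmbedding f _

lemma integrableOn_cube_sub {f : EuclideanSpace ℝ (Fin n) → ℝ} {y c : EuclideanSpace ℝ (Fin n)}
    {l : ℝ} (h : IntegrableOn f (cube (c - y) l)) :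
    IntegrableOn (fun x => f (x - y)) (cube c l) := by
  rw [← cube_preimage c y l]
  rw [IntegrableOn, ← ((measurePreserving_sub_right volume y).restrict_preimage_emb
    (MeasurableEquiv.subRight y).measurableEmbedding (cube (c - y) l)).integrable_comp_emb
    (MeasurableEquiv.subRight y).measurableEmbedding] at h
  exact h

lemma cubeAvg_sub (f : EuclideanSpace ℝ (Fin n) → ℝ) (y c : EuclideanSpace ℝ (Fin n)) (l : ℝ) :
    cubeAvg (fun x => f (x - y)) c l = cubeAvg f (c - y) l := by
  unfold cubeAvg
  rw [integral_cube_sub]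

lemma cubeOsc_sub_right (f : EuclideanSpace ℝ (Fin n) → ℝ) (y c : EuclideanSpace ℝ (Fin n)) (l : ℝ) :
    cubeOsc (fun x => f (x - y)) c l = cubeOsc f (c - y) l := by
  unfold cubeOsc
  rw [cubeAvg_sub]
  congr 1
  exact integral_cube_sub (fun t => |f t - cubeAvg f (c - y) l|) y c l

lemma cubeOsc_nonneg (f : EuclideanSpace ℝ (Fin n) → ℝ) (c : EuclideanSpace ℝ (Fin n)) {l : ℝ}
    (hl : 0 ≤ l) : 0 ≤ cubeOsc f c l := by
  apply div_nonneg _ (pow_nonneg hl n)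
  exact setIntegral_nonneg (measurableSet_cube c l) fun x _ => abs_nonneg _

lemma volume_cube_lt_top (c : EuclideanSpace ℝ (Fin n)) {l : ℝ} (hl : 0 ≤ l) :
    volume (cube c l) < ⊤ := by
  rw [volume_cube c hl]; exact ENNReal.ofReal_lt_top

end TBB

namespace TBB
variable {n : ℕ}

lemma setIntegral_const_cube (a : ℝ) (c : EuclideanSpace ℝ (Fin n)) {l : ℝ} (hl : 0 ≤ l) :
    ∫ _x in cube c l, a = l ^ n * a := by
  rw [setIntegral_const, measureReal_def, volume_cube c hl, smul_eq_mul, ENNReal.toReal_ofReal (by positivity)]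

lemma cubeOsc_add_le {f g : EuclideanSpace ℝ (Fin n) → ℝ} (c : EuclideanSpace ℝ (Fin n)) {l : ℝ}
    (hl : 0 < l) (hf : IntegrableOn f (cube c l)) (hg : IntegrableOn g (cube c l)) :
    cubeOsc (fun x => f x - g x) c l ≤ cubeOsc f c l + cubeOsc g c l := by
  have hvol := volume_cube_lt_top c hl.le
  have hconst : ∀ a : ℝ, IntegrableOn (fun _ => a) (cube c l) := fun a =>
    integrableOn_const hvol.ne
  have havg : cubeAvg (fun x => f x - g x) c l = cubeAvg f c l - cubeAvg g c l := by
    unfold cubeAvg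
    rw [integral_sub hf hg, sub_div]
  have h1 : IntegrableOn (fun x => |f x - cubeAvg f c l|) (cube c l) := (hf.sub (hconst _)).abs
  have h2 : IntegrableOn (fun x => |g x - cubeAvg g c l|) (cube c l) := (hg.sub (hconst _)).abs
  have h3 : IntegrableOn
      (fun x => |f x - g x - (cubeAvg f c l - cubeAvg g c l)|) (cube c l) :=
    ((hf.sub hg).sub (hconst _)).abs
  unfold cubeOsc
  rw [havg, ← add_div]
  gcongr
  rw [← integral_add h1 h2]
  refine integral_mono h3 (h1.add h2) fun x => ?_
  have : f x - g x - (cubeAvg f c l - cubeAvg g c l)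
      = (f x - cubeAvg f c l) - (g x - cubeAvg g c l) := by ring
  rw [this]
  exact abs_sub _ _

lemma cubeOsc_le_two_avg {f : EuclideanSpace ℝ (Fin n) → ℝ} (c : EuclideanSpace ℝ (Fin n)) {l : ℝ}
    (hl : 0 < l) (hf : IntegrableOn f (cube c l)) (a : ℝ) :
    cubeOsc f c l ≤ 2 * ((∫ x in cube c l, |f x - a|) / l ^ n) := by
  have hvol := volume_cube_lt_top c hl.le
  have hconst : ∀ b : ℝ, IntegrableOn (fun _ => b) (cube c l) := fun b =>
    integrableOn_const hvol.ne
  have h1 : IntegrableOn (fun x => |f x - a|) (cube c l) := (hf.sub (hconst _)).abs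
  set m := cubeAvg f c l with hm
  have hma : |m - a| ≤ (∫ x in cube c l, |f x - a|) / l ^ n := by
    have hstep : m - a = (∫ x in cube c l, (f x - a)) / l ^ n := by
      rw [integral_sub hf (hconst a), setIntegral_const_cube a c hl.le, hm]
      unfold cubeAvg
      field_simp
    rw [hstep, abs_div, abs_of_pos (show (0:ℝ) < l ^ n by positivity)]
    gcongr
    calc |∫ x in cube c l, (f x - a)| = ‖∫ x in cube c l, (f x - a)‖ := (Real.norm_eq_abs _).symm
      _ ≤ ∫ x in cube c l, ‖f x - a‖ := norm_integral_le_integral_norm _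
      _ = ∫ x in cube c l, |f x - a| := by simp [Real.norm_eq_abs]
  calc cubeOsc f c l = (∫ x in cube c l, |f x - m|) / l ^ n := rfl
    _ ≤ (∫ x in cube c l, (|f x - a| + |m - a|)) / l ^ n := by
        apply div_le_div_of_nonneg_right ?_ (by positivity)
        refine integral_mono ((hf.sub (hconst _)).abs) (h1.add (hconst _)) fun x => ?_
        have : f x - m = (f x - a) - (m - a) := by ring
        rw [this]
        exact abs_sub _ _
    _ = ((∫ x in cube c l, |f x - a|) + l ^ n * |m - a|) / l ^ n := by
        rw [integral_add h1 (hconst _), setIntegral_const_cube _ c hl.le]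
    _ ≤ ((∫ x in cube c l, |f x - a|) + l ^ n * ((∫ x in cube c l, |f x - a|) / l ^ n)) / l ^ n := by
        gcongr
    _ = 2 * ((∫ x in cube c l, |f x - a|) / l ^ n) := by
        field_simp
        ring


lemma cube_mono {c w : EuclideanSpace ℝ (Fin n)} {l L : ℝ}
    (h : ∀ i, w i ≤ c i ∧ c i + l ≤ w i + L) : cube c l ⊆ cube w L := by
  intro x hx i
  have hi := hx i
  simp only [Set.mem_Ioo] at *
  exact ⟨lt_of_le_of_lt (h i).1 hi.1, lt_of_lt_of_le hi.2 (h i).2⟩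

/-- Key small-scale estimate: the integral of `|φ(x-y) - φ(x)|` over any cube of side `δ`
is at most `2 (2δ)^n B`. -/
lemma small_bound {φ : EuclideanSpace ℝ (Fin n) → ℝ} (hφ : LocallyIntegrable φ) {δ : ℝ}
    (hδ : 0 < δ) {y : EuclideanSpace ℝ (Fin n)} (hy : ‖y‖ < δ) {B : ℝ}
    (hB : ∀ c l, 0 < l → l ≤ 2 * δ → cubeOsc φ c l ≤ B) (z : EuclideanSpace ℝ (Fin n)) :
    ∫ x in cube z δ, |φ (x - y) - φ x| ≤ 2 * (2 * δ) ^ n * B := by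
  set w : EuclideanSpace ℝ (Fin n) := WithLp.toLp 2 (fun i => z i - max (y i) 0 : Fin n → ℝ) with hw
  have hwi : ∀ i, w i = z i - max (y i) 0 := fun i => rfl
  have hyabs : ∀ i, |y i| < δ := fun i => lt_of_le_of_lt (abs_coord_le y i) hy
  set m := cubeAvg φ w (2 * δ) with hm
  have hvol := volume_cube_lt_top w (show (0:ℝ) ≤ 2 * δ by linarith)
  have hconst : ∀ a : ℝ, IntegrableOn (fun _ => a) (cube w (2 * δ)) := fun a =>
    integrableOn_const hvol.ne
  have hintw : IntegrableOn (fun x => |φ x - m|) (cube w (2 * δ)) :=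
    ((integrableOn_cube hφ w (2 * δ)).sub (hconst m)).abs
  have sub1 : cube z δ ⊆ cube w (2 * δ) := by
    refine cube_mono fun i => ?_
    obtain ⟨h1, h2⟩ := abs_lt.1 (hyabs i)
    rw [hwi i]
    have hmax0 : (0:ℝ) ≤ max (y i) 0 := le_max_right _ _
    have hmaxle : max (y i) 0 ≤ δ := max_le h2.le hδ.le
    exact ⟨by linarith, by linarith⟩
  have sub2 : cube (z - y) δ ⊆ cube w (2 * δ) := by
    refine cube_mono fun i => ?_
    obtain ⟨h1, h2⟩ := abs_lt.1 (hyabs i)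
    have hzy : (z - y) i = z i - y i := by simp
    rw [hwi i, hzy]
    have hmaxy : y i ≤ max (y i) 0 := le_max_left _ _
    have hmaxle2 : max (y i) 0 ≤ y i + δ := max_le (by linarith) (by linarith)
    exact ⟨by linarith, by linarith⟩
  have hosc : (∫ x in cube w (2 * δ), |φ x - m|) ≤ (2 * δ) ^ n * B := by
    have h := hB w (2 * δ) (by linarith) le_rfl
    unfold cubeOsc at h
    rw [div_le_iff₀ (show (0:ℝ) < (2 * δ) ^ n by positivity)] at h
    calc (∫ x in cube w (2 * δ), |φ x - m|) ≤ B * (2 * δ) ^ n := h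
      _ = (2 * δ) ^ n * B := mul_comm _ _
  have hA : (∫ x in cube z δ, |φ (x - y) - m|) ≤ (2 * δ) ^ n * B := by
    have ht : (∫ x in cube z δ, |φ (x - y) - m|)
        = ∫ x in cube (z - y) δ, |φ x - m| :=
      integral_cube_sub (fun t => |φ t - m|) y z δ
    rw [ht]
    refine le_trans (setIntegral_mono_set hintw ?_ sub2.eventuallyLE) hosc
    exact Filter.Eventually.of_forall fun x => abs_nonneg _
  have hB2 : (∫ x in cube z δ, |φ x - m|) ≤ (2 * δ) ^ n * B := by
    refine le_trans (setIntegral_mono_set hintw ?_ sub1.eventuallyLE) hosc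
    exact Filter.Eventually.of_forall fun x => abs_nonneg _
  have hint1 : IntegrableOn (fun x => |φ (x - y) - m|) (cube z δ) :=
    ((integrableOn_cube_sub (integrableOn_cube hφ _ _)).sub
      (integrableOn_const (volume_cube_lt_top z hδ.le).ne)).abs
  have hint2 : IntegrableOn (fun x => |φ x - m|) (cube z δ) :=
    ((integrableOn_cube hφ z δ).sub
      (integrableOn_const (volume_cube_lt_top z hδ.le).ne)).abs
  have hpt : (∫ x in cube z δ, |φ (x - y) - φ x|)
      ≤ ∫ x in cube z δ, (|φ (x - y) - m| + |φ x - m|) := by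
    refine integral_mono ?_ (hint1.add hint2) fun x => ?_
    · exact ((integrableOn_cube_sub (integrableOn_cube hφ _ _)).sub
        (integrableOn_cube hφ z δ)).abs
    · have : φ (x - y) - φ x = (φ (x - y) - m) - (φ x - m) := by ring
      rw [this]
      exact abs_sub _ _
  calc (∫ x in cube z δ, |φ (x - y) - φ x|)
      ≤ ∫ x in cube z δ, (|φ (x - y) - m| + |φ x - m|) := hpt
    _ = (∫ x in cube z δ, |φ (x - y) - m|) + ∫ x in cube z δ, |φ x - m| :=
        integral_add hint1 hint2
    _ ≤ (2 * δ) ^ n * B + (2 * δ) ^ n * B := add_le_add hA hB2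
    _ = 2 * (2 * δ) ^ n * B := by ring


lemma big_bound {φ : EuclideanSpace ℝ (Fin n) → ℝ} (hmeas : Measurable φ)
    (hφ : LocallyIntegrable φ) {δ : ℝ} (hδ : 0 < δ) {y : EuclideanSpace ℝ (Fin n)}
    (hy : ‖y‖ < δ) {B : ℝ} (hB : ∀ c l, 0 < l → l ≤ 2 * δ → cubeOsc φ c l ≤ B)
    (c : EuclideanSpace ℝ (Fin n)) {l : ℝ} (hl : 0 < l) :
    (∫ x in cube c l, |φ (x - y) - φ x|)
      ≤ 2 * (2 * δ) ^ n * B * ((l + δ) ^ n / δ ^ n) := by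
  have hB0 : 0 ≤ B := (cubeOsc_nonneg φ 0 hδ.le).trans (hB 0 δ hδ (by linarith))
  set K : ℝ := 2 * (2 * δ) ^ n * B with hK
  have hK0 : 0 ≤ K := by positivity
  have hpsimeas : Measurable fun x : EuclideanSpace ℝ (Fin n) => |φ (x - y) - φ x| :=
    ((hmeas.comp (MeasurableEquiv.subRight y).measurable).sub hmeas).abs
  set G : EuclideanSpace ℝ (Fin n) → ℝ≥0∞ := fun x => ENNReal.ofReal |φ (x - y) - φ x| with hG
  have hGmeas : Measurable G := ENNReal.measurable_ofReal.comp hpsimeas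
  have hintpsi : IntegrableOn (fun x => |φ (x - y) - φ x|) (cube c l) :=
    ((integrableOn_cube_sub (integrableOn_cube hφ _ _)).sub (integrableOn_cube hφ c l)).abs
  set S : Set (EuclideanSpace ℝ (Fin n) × EuclideanSpace ℝ (Fin n)) :=
    {p | p.1 ∈ cube p.2 δ} with hSdef
  have hS : MeasurableSet S := by
    have : S = ⋂ i, ({p : EuclideanSpace ℝ (Fin n) × EuclideanSpace ℝ (Fin n) |
        p.2 i < p.1 i} ∩ {p | p.1 i < p.2 i + δ}) := by
      ext p
      simp [hSdef, cube, forall_and]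
    rw [this]
    exact MeasurableSet.iInter fun i =>
      (measurableSet_lt ((meas_coord i).comp measurable_snd)
        ((meas_coord i).comp measurable_fst)).inter
      (measurableSet_lt ((meas_coord i).comp measurable_fst)
        (((meas_coord i).comp measurable_snd).add_const δ))
  set d : EuclideanSpace ℝ (Fin n) := WithLp.toLp 2 (fun _ => δ : Fin n → ℝ) with hd
  have hfib : ∀ x : EuclideanSpace ℝ (Fin n),
      (∫⁻ z, S.indicator 1 (x, z)) = ENNReal.ofReal (δ ^ n) := by
    intro x
    have hiff : ∀ z : EuclideanSpace ℝ (Fin n), ((x, z) ∈ S) ↔ z ∈ cube (x - d) δ := by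
      intro z
      have hxd : ∀ i, (x - d) i = x i - δ := fun i => by simp [hd]
      constructor <;> intro h i <;> obtain ⟨h1, h2⟩ := h i <;>
        rw [hxd i] at * <;> exact ⟨by linarith, by linarith⟩
    have heq : (fun z => S.indicator (1 :
        EuclideanSpace ℝ (Fin n) × EuclideanSpace ℝ (Fin n) → ℝ≥0∞) (x, z))
        = (cube (x - d) δ).indicator 1 := by
      funext z
      by_cases h : (x, z) ∈ S
      · rw [Set.indicator_of_mem h, Set.indicator_of_mem ((hiff z).1 h)]
        rfl
      · rw [Set.indicator_of_notMem h, Set.indicator_of_notMem (fun hc => h ((hiff z).2 hc))]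
    rw [heq, lintegral_indicator_one (measurableSet_cube _ _), volume_cube _ hδ.le]
  set bigc : EuclideanSpace ℝ (Fin n) := WithLp.toLp 2 (fun i => c i - δ : Fin n → ℝ) with hbigc
  have hinner : ∀ z : EuclideanSpace ℝ (Fin n),
      (∫⁻ x in cube c l, G x * S.indicator 1 (x, z))
        ≤ (cube bigc (l + δ)).indicator (fun _ => ENNReal.ofReal K) z := by
    intro z
    have hprod : (fun x => G x * S.indicator (1 :
        EuclideanSpace ℝ (Fin n) × EuclideanSpace ℝ (Fin n) → ℝ≥0∞) (x, z))
        = fun x => (cube z δ).indicator G x := by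
      funext x
      by_cases h : x ∈ cube z δ
      · have hS1 : S.indicator (1 : EuclideanSpace ℝ (Fin n) × EuclideanSpace ℝ (Fin n) → ℝ≥0∞) (x, z) = 1 :=
          Set.indicator_of_mem (show (x, z) ∈ S from h) 1
        rw [Set.indicator_of_mem h, hS1, mul_one]
      · have hS0 : S.indicator (1 : EuclideanSpace ℝ (Fin n) × EuclideanSpace ℝ (Fin n) → ℝ≥0∞) (x, z) = 0 :=
          Set.indicator_of_notMem (show (x, z) ∉ S from h) 1
        rw [Set.indicator_of_notMem h, hS0, mul_zero]
    rw [hprod, lintegral_indicator (measurableSet_cube z δ),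
      Measure.restrict_restrict (measurableSet_cube z δ)]
    by_cases hz : z ∈ cube bigc (l + δ)
    · rw [Set.indicator_of_mem hz]
      calc ∫⁻ x in cube z δ ∩ cube c l, G x
          ≤ ∫⁻ x in cube z δ, G x :=
            lintegral_mono' (Measure.restrict_mono Set.inter_subset_left le_rfl) le_rfl
        _ = ENNReal.ofReal (∫ x in cube z δ, |φ (x - y) - φ x|) :=
            (ofReal_integral_eq_lintegral_ofReal
              (((integrableOn_cube_sub (integrableOn_cube hφ _ _)).sub
                (integrableOn_cube hφ z δ)).abs)
              (Filter.Eventually.of_forall fun x => abs_nonneg _)).symm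
        _ ≤ ENNReal.ofReal K := ENNReal.ofReal_le_ofReal (small_bound hφ hδ hy hB z)
    · rw [Set.indicator_of_notMem hz]
      have hempty : cube z δ ∩ cube c l = ∅ := by
        rw [Set.eq_empty_iff_forall_notMem]
        rintro x ⟨hx1, hx2⟩
        refine hz fun i => ?_
        obtain ⟨ha1, ha2⟩ := hx1 i
        obtain ⟨hb1, hb2⟩ := hx2 i
        have : bigc i = c i - δ := rfl
        rw [this]
        exact ⟨by linarith, by linarith⟩
      rw [hempty, Measure.restrict_empty, lintegral_zero_measure]
  have main : ENNReal.ofReal ((∫ x in cube c l, |φ (x - y) - φ x|) * δ ^ n)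
      ≤ ENNReal.ofReal (K * (l + δ) ^ n) := by
    have hI0 : 0 ≤ ∫ x in cube c l, |φ (x - y) - φ x| :=
      setIntegral_nonneg (measurableSet_cube c l) fun x _ => abs_nonneg _
    rw [ENNReal.ofReal_mul hI0, ENNReal.ofReal_mul hK0]
    rw [ofReal_integral_eq_lintegral_ofReal hintpsi
      (Filter.Eventually.of_forall fun x => abs_nonneg _)]
    calc (∫⁻ x in cube c l, G x) * ENNReal.ofReal (δ ^ n)
        = ∫⁻ x in cube c l, G x * ENNReal.ofReal (δ ^ n) :=
          (lintegral_mul_const _ hGmeas).symm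
      _ = ∫⁻ x in cube c l, ∫⁻ z, G x * S.indicator 1 (x, z) := by
          refine lintegral_congr fun x => ?_
          have hmz : Measurable fun z : EuclideanSpace ℝ (Fin n) =>
              S.indicator (1 : EuclideanSpace ℝ (Fin n) × EuclideanSpace ℝ (Fin n) → ℝ≥0∞) (x, z) :=
            (measurable_one.indicator hS).comp measurable_prodMk_left
          rw [lintegral_const_mul _ hmz, hfib x]
      _ = ∫⁻ z, ∫⁻ x in cube c l, G x * S.indicator 1 (x, z) := by
          apply lintegral_lintegral_swap
          exact ((hGmeas.comp measurable_fst).mul (measurable_one.indicator hS)).aemeasurable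
      _ ≤ ∫⁻ z, (cube bigc (l + δ)).indicator (fun _ => ENNReal.ofReal K) z :=
          lintegral_mono hinner
      _ = ENNReal.ofReal K * volume (cube bigc (l + δ)) := by
          rw [lintegral_indicator (measurableSet_cube _ _), setLIntegral_const]
      _ = ENNReal.ofReal K * ENNReal.ofReal ((l + δ) ^ n) := by
          rw [volume_cube _ (by linarith : (0:ℝ) ≤ l + δ)]
  have hreal : (∫ x in cube c l, |φ (x - y) - φ x|) * δ ^ n ≤ K * (l + δ) ^ n :=
    (ENNReal.ofReal_le_ofReal_iff (by positivity)).1 main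
  rw [mul_div_assoc'] at *
  rw [le_div_iff₀ (show (0:ℝ) < δ ^ n by positivity)]
  calc (∫ x in cube c l, |φ (x - y) - φ x|) * δ ^ n ≤ K * (l + δ) ^ n := hreal
    _ = K * (l + δ) ^ n := rfl


lemma cubeAvg_congr {f g : EuclideanSpace ℝ (Fin n) → ℝ} (h : f =ᵐ[volume] g)
    (c : EuclideanSpace ℝ (Fin n)) (l : ℝ) : cubeAvg f c l = cubeAvg g c l := by
  unfold cubeAvg
  rw [integral_congr_ae (ae_restrict_of_ae h)]

lemma cubeOsc_congr {f g : EuclideanSpace ℝ (Fin n) → ℝ} (h : f =ᵐ[volume] g)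
    (c : EuclideanSpace ℝ (Fin n)) (l : ℝ) : cubeOsc f c l = cubeOsc g c l := by
  unfold cubeOsc
  rw [cubeAvg_congr h]
  congr 1
  exact integral_congr_ae (ae_restrict_of_ae (h.mono fun x hx => by simp only []; rw [hx]))

lemma osc_bound_meas {φ : EuclideanSpace ℝ (Fin n) → ℝ} (hmeas : Measurable φ)
    (hφ : LocallyIntegrable φ) {δ : ℝ} (hδ : 0 < δ) {y : EuclideanSpace ℝ (Fin n)}
    (hy : ‖y‖ < δ) {B : ℝ} (hB : ∀ c l, 0 < l → l ≤ 2 * δ → cubeOsc φ c l ≤ B)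
    (c : EuclideanSpace ℝ (Fin n)) {l : ℝ} (hl : 0 < l) :
    cubeOsc (fun x => φ (x - y) - φ x) c l ≤ 4 * 3 ^ n * B := by
  have hB0 : 0 ≤ B := (cubeOsc_nonneg φ 0 hδ.le).trans (hB 0 δ hδ (by linarith))
  have h3n : (1:ℝ) ≤ 3 ^ n := one_le_pow₀ (by norm_num)
  rcases le_or_gt l (2 * δ) with hcase | hcase
  · have hsum := cubeOsc_add_le (f := fun x => φ (x - y)) (g := φ) c hl
      (integrableOn_cube_sub (integrableOn_cube hφ _ _)) (integrableOn_cube hφ c l)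
    have htr : cubeOsc (fun x => φ (x - y)) c l = cubeOsc φ (c - y) l :=
      cubeOsc_sub_right φ y c l
    have h1 := hB (c - y) l hl hcase
    have h2 := hB c l hl hcase
    nlinarith [hsum, htr]
  · have hI := big_bound hmeas hφ hδ hy hB c hl
    have hint : IntegrableOn (fun x => φ (x - y) - φ x) (cube c l) :=
      (integrableOn_cube_sub (integrableOn_cube hφ _ _)).sub (integrableOn_cube hφ c l)
    have h2 := cubeOsc_le_two_avg c hl hint 0
    simp only [sub_zero] at h2
    have hratio : (2 * δ) ^ n * (l + δ) ^ n ≤ 3 ^ n * (δ ^ n * l ^ n) := by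
      have h' : 2 * δ * (l + δ) ≤ 3 * (δ * l) := by nlinarith
      calc (2 * δ) ^ n * (l + δ) ^ n = (2 * δ * (l + δ)) ^ n := (mul_pow _ _ n).symm
        _ ≤ (3 * (δ * l)) ^ n := pow_le_pow_left₀ (by positivity) h' n
        _ = 3 ^ n * (δ ^ n * l ^ n) := by rw [mul_pow, mul_pow]
    calc cubeOsc (fun x => φ (x - y) - φ x) c l
        ≤ 2 * ((∫ x in cube c l, |φ (x - y) - φ x|) / l ^ n) := h2
      _ ≤ 2 * ((2 * (2 * δ) ^ n * B * ((l + δ) ^ n / δ ^ n)) / l ^ n) := by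
          gcongr
      _ = (4 * B) * ((2 * δ) ^ n * (l + δ) ^ n) / (δ ^ n * l ^ n) := by
          field_simp
          ring
      _ ≤ 4 * 3 ^ n * B := by
          rw [div_le_iff₀ (show (0:ℝ) < δ ^ n * l ^ n by positivity)]
          calc (4 * B) * ((2 * δ) ^ n * (l + δ) ^ n)
              ≤ (4 * B) * (3 ^ n * (δ ^ n * l ^ n)) :=
                mul_le_mul_of_nonneg_left hratio (by linarith)
            _ = 4 * 3 ^ n * B * (δ ^ n * l ^ n) := by ring

lemma osc_bound {φ : EuclideanSpace ℝ (Fin n) → ℝ}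
    (hφ : LocallyIntegrable φ) {δ : ℝ} (hδ : 0 < δ) {y : EuclideanSpace ℝ (Fin n)}
    (hy : ‖y‖ < δ) {B : ℝ} (hB : ∀ c l, 0 < l → l ≤ 2 * δ → cubeOsc φ c l ≤ B)
    (c : EuclideanSpace ℝ (Fin n)) {l : ℝ} (hl : 0 < l) :
    cubeOsc (fun x => φ (x - y) - φ x) c l ≤ 4 * 3 ^ n * B := by
  set φ' := hφ.aestronglyMeasurable.mk φ with hφ'def
  have hmeas' : Measurable φ' := hφ.aestronglyMeasurable.stronglyMeasurable_mk.measurable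
  have hae : φ =ᵐ[volume] φ' := hφ.aestronglyMeasurable.ae_eq_mk
  have hφ' : LocallyIntegrable φ' := locallyIntegrable_iff.2 fun k hk =>
    (hφ.integrableOn_isCompact hk).congr (ae_restrict_of_ae hae)
  have haetr : (fun x => φ (x - y)) =ᵐ[volume] fun x => φ' (x - y) :=
    (measurePreserving_sub_right volume y).quasiMeasurePreserving.ae_eq hae
  have haepsi : (fun x => φ (x - y) - φ x) =ᵐ[volume] fun x => φ' (x - y) - φ' x := by
    filter_upwards [haetr, hae] with x h1 h2
    rw [h1, h2]
  rw [cubeOsc_congr haepsi]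
  refine osc_bound_meas hmeas' hφ' hδ hy (fun c' l' hl' hle => ?_) c hl
  rw [← cubeOsc_congr hae]
  exact hB c' l' hl' hle

end TBB

/-- If `φ ∈ BMO(ℝⁿ)` and `|y| < δ`, then `‖φ_y - φ‖_* ≤ C(n) M_{2δ}(φ)`, where
`M_{2δ}(φ)` is the supremum of mean oscillations of `φ` over cubes of side at most `2δ`.
In particular, if `φ ∈ VMO(ℝⁿ)` then translations act continuously on `φ` in `BMO` norm. -/
theorem translation_bmo_bound (n : ℕ) :
    (∃ C > (0 : ℝ), ∀ (φ : EuclideanSpace ℝ (Fin n) → ℝ) (δ B : ℝ)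
        (y : EuclideanSpace ℝ (Fin n)),
        LocallyIntegrable φ → 0 < δ → ‖y‖ < δ →
        (∀ c l, 0 < l → l ≤ 2 * δ → cubeOsc φ c l ≤ B) →
        ∀ c l, 0 < l → cubeOsc (fun x => φ (x - y) - φ x) c l ≤ C * B) ∧
      ∀ φ : EuclideanSpace ℝ (Fin n) → ℝ, IsVMO φ →
        Tendsto (fun y : EuclideanSpace ℝ (Fin n) => bmoNorm (fun x => φ (x - y) - φ x))
          (nhds 0) (nhds 0) := by
  constructor
  · refine ⟨4 * 3 ^ n, by positivity, ?_⟩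
    intro φ δ B y hφ hδ hy hB c l hl
    exact TBB.osc_bound hφ hδ hy hB c hl
  · intro φ hφ
    obtain ⟨⟨hloc, -⟩, hvmo⟩ := hφ
    rw [Metric.tendsto_nhds]
    intro ε hε
    rw [Metric.eventually_nhds_iff]
    obtain ⟨δ, hδ, hmod⟩ := hvmo (ε / (2 * (4 * 3 ^ n))) (by positivity)
    refine ⟨δ / 2, by linarith, fun {y} hy => ?_⟩
    have hy' : ‖y‖ < δ / 2 := by rwa [dist_zero_right] at hy
    have hbound : ∀ c l, 0 < l → cubeOsc (fun x => φ (x - y) - φ x) c l ≤ ε / 2 := by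
      intro c l hl
      have h := TBB.osc_bound hloc (show (0:ℝ) < δ / 2 by linarith) hy'
        (B := ε / (2 * (4 * 3 ^ n)))
        (fun c' l' hl' hle' => hmod c' l' hl' (by linarith)) c hl
      have hval : 4 * 3 ^ n * (ε / (2 * (4 * 3 ^ n))) = ε / 2 := by
        field_simp
      linarith [h, hval.le, hval.ge]
    have hmem : (ε / 2) ∈ {C : ℝ | 0 ≤ C ∧
        ∀ c l, 0 < l → cubeOsc (fun x => φ (x - y) - φ x) c l ≤ C} :=
      ⟨by linarith, hbound⟩
    have hbdd : BddBelow {C : ℝ | 0 ≤ C ∧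
        ∀ c l, 0 < l → cubeOsc (fun x => φ (x - y) - φ x) c l ≤ C} :=
      ⟨0, fun t ht => ht.1⟩
    have h1 : bmoNorm (fun x => φ (x - y) - φ x) ≤ ε / 2 := csInf_le hbdd hmem
    have h0 : 0 ≤ bmoNorm (fun x => φ (x - y) - φ x) :=
      Real.sInf_nonneg fun t ht => ht.1
    rw [Real.dist_eq, sub_zero, abs_of_nonneg h0]
    linarith
end
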